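/- arXiv:2106.01929 — 5 statements merged into one kernel-verified Lean document; each statement's English description precedes it below -/
import Mathlib

section
/- Let G be a finite group, H and K subgroups, and π an irreducible complex representation of G with dim π^H = dim π^K = 1. Let v_H ∈ π^H and v_K ∈ π^K be unit vectors with respect to a G-invariant inner product on π. Then |⟨v_H, v_K⟩|² = (1/(|H||K|)) · Σ_{h∈H} Σ_{k∈K} χ_π(hk), where χ_π is the character of π. -/
open scoped InnerProductSpace

/-- The subspace of vectors fixed by every element of a subgroup `H` under a
representation `ρ`. -/
def fixedSpace {k G V : Type*} [CommSemiring k] [Group G] [AddCommMonoid V] [Module k V]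
    (ρ : Representation k G V) (H : Subgroup G) : Submodule k V where
  carrier := {v | ∀ h ∈ H, ρ h v = v}
  add_mem' := by
    intro a b ha hb h hh
    simp [map_add, ha h hh, hb h hh]
  zero_mem' := by
    intro h hh
    simp
  smul_mem' := by
    intro c a ha h hh
    simp [map_smul, ha h hh]

lemma aux_sum {G : Type} [Group G] {V : Type} [NormedAddCommGroup V]
    [InnerProductSpace ℂ V] [FiniteDimensional ℂ V]
    (ρ : Representation ℂ G V)
    (hinv : ∀ (g : G) (v w : V), ⟪ρ g v, ρ g w⟫_ℂ = ⟪v, w⟫_ℂ)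
    (J : Subgroup G) [Fintype J]
    (hJ : Module.finrank ℂ (fixedSpace ρ J) = 1)
    (v : V) (hv : v ∈ fixedSpace ρ J) (hv1 : ‖v‖ = 1) (x : V) :
    ∑ j : J, ρ (j : G) x = (Fintype.card J : ℂ) • ⟪v, x⟫_ℂ • v := by
  have hv0 : v ≠ 0 := by
    intro h; rw [h, norm_zero] at hv1; norm_num at hv1
  have hspan : (ℂ ∙ v) = fixedSpace ρ J := by
    apply Submodule.eq_of_le_of_finrank_le ((Submodule.span_singleton_le_iff_mem v _).mpr hv)
    rw [hJ, finrank_span_singleton hv0]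
  set y := ∑ j : J, ρ (j : G) x with hy
  have hymem : y ∈ fixedSpace ρ J := by
    intro g hg
    have h1 : ρ g y = ∑ j : J, ρ (g * (j : G)) x := by
      rw [hy, map_sum]
      exact Finset.sum_congr rfl fun j _ => by rw [map_mul, Module.End.mul_apply]
    rw [h1]
    exact Fintype.sum_equiv (Equiv.mulLeft (⟨g, hg⟩ : J))
      (fun j : J => ρ (g * (j : G)) x) (fun j : J => ρ ((j : J) : G) x)
      (fun j => by simp)
  obtain ⟨c, hc⟩ := Submodule.mem_span_singleton.mp (show y ∈ (ℂ ∙ v) from hspan ▸ hymem)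
  have hvv : ⟪v, v⟫_ℂ = 1 := by
    rw [inner_self_eq_norm_sq_to_K, hv1]; norm_num
  have hterm : ∀ j : J, ⟪v, ρ (j : G) x⟫_ℂ = ⟪v, x⟫_ℂ := fun j => by
    rw [← hinv (j : G) v x, hv (j : G) j.2]
  have hinner : ⟪v, y⟫_ℂ = (Fintype.card J : ℂ) * ⟪v, x⟫_ℂ := by
    have h2 : ∑ j : J, ⟪v, ρ (j : G) x⟫_ℂ = ∑ _j : J, ⟪v, x⟫_ℂ :=
      Finset.sum_congr rfl fun j _ => hterm j
    rw [hy, inner_sum, h2]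
    simp [Finset.card_univ, mul_comm]
  have hc' : c = (Fintype.card J : ℂ) * ⟪v, x⟫_ℂ := by
    rw [← hinner, ← hc, inner_smul_right, hvv, mul_one]
  rw [← hc, hc', smul_smul]

/-- Let `G` be a finite group, `H, K` subgroups, and `π` an irreducible complex
representation of `G` with `dim π^H = dim π^K = 1`. If `v_H ∈ π^H` and `v_K ∈ π^K` are
unit vectors for a `G`-invariant inner product on `π`, then
`|⟨v_H, v_K⟩|² = (1/(|H||K|)) ∑_{h ∈ H} ∑_{k ∈ K} χ_π(hk)`. -/
theorem stmt_0 {G : Type} [Group G] [Fintype G] (H K : Subgroup G)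
    [Fintype H] [Fintype K]
    {V : Type} [NormedAddCommGroup V] [InnerProductSpace ℂ V] [FiniteDimensional ℂ V]
    (ρ : Representation ℂ G V)
    (hirr : ∀ U : Submodule ℂ V, (∀ g v, v ∈ U → ρ g v ∈ U) → U = ⊥ ∨ U = ⊤)
    (hinv : ∀ (g : G) (v w : V), ⟪ρ g v, ρ g w⟫_ℂ = ⟪v, w⟫_ℂ)
    (hH : Module.finrank ℂ (fixedSpace ρ H) = 1)
    (hK : Module.finrank ℂ (fixedSpace ρ K) = 1)
    (vH vK : V) (hvH : vH ∈ fixedSpace ρ H) (hvK : vK ∈ fixedSpace ρ K)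
    (hvH1 : ‖vH‖ = 1) (hvK1 : ‖vK‖ = 1) :
    (‖⟪vH, vK⟫_ℂ‖ ^ 2 : ℂ) =
      ((Fintype.card H : ℂ) * (Fintype.card K : ℂ))⁻¹ *
        ∑ h : H, ∑ k : K, LinearMap.trace ℂ V (ρ ((h : G) * (k : G))) := by
  set cH := (Fintype.card H : ℂ) with hcH
  set cK := (Fintype.card K : ℂ) with hcK
  have hcH0 : cH ≠ 0 := by
    rw [hcH]; exact_mod_cast Nat.cast_ne_zero.mpr Fintype.card_ne_zero
  have hcK0 : cK ≠ 0 := by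
    rw [hcK]; exact_mod_cast Nat.cast_ne_zero.mpr Fintype.card_ne_zero
  set T : V →ₗ[ℂ] V :=
    dualTensorHom ℂ V V ((innerSL ℂ vK).toLinearMap ⊗ₜ[ℂ] vH) with hT
  have hsum : (∑ h : H, ∑ k : K, ρ ((h : G) * (k : G)))
      = (cH * cK * ⟪vH, vK⟫_ℂ) • T := by
    apply LinearMap.ext
    intro x
    have h1 : (∑ h : H, ∑ k : K, ρ ((h : G) * (k : G))) x
        = ∑ h : H, (ρ (h : G)) (∑ k : K, ρ (k : G) x) := by
      simp only [LinearMap.sum_apply, map_sum]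
      exact Finset.sum_congr rfl fun h _ => Finset.sum_congr rfl fun k _ => by
        rw [map_mul, Module.End.mul_apply]
    rw [h1]
    rw [Finset.sum_congr rfl (fun h (_ : h ∈ Finset.univ) => by
      rw [aux_sum ρ hinv K hK vK hvK hvK1 x])]
    have h2 : ∑ h : H, (ρ (h : G)) ((Fintype.card K : ℂ) • ⟪vK, x⟫_ℂ • vK)
        = (Fintype.card K : ℂ) • ⟪vK, x⟫_ℂ • ∑ h : H, ρ (h : G) vK := by
      simp only [map_smul]
      rw [← Finset.smul_sum, ← Finset.smul_sum]
    rw [h2, aux_sum ρ hinv H hH vH hvH hvH1 vK]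
    simp only [hT, LinearMap.smul_apply, dualTensorHom_apply, ContinuousLinearMap.coe_coe,
      innerSL_apply_apply, smul_smul, hcH, hcK]
    congr 1
    ring
  have htr : ∑ h : H, ∑ k : K, LinearMap.trace ℂ V (ρ ((h : G) * (k : G)))
      = LinearMap.trace ℂ V (∑ h : H, ∑ k : K, ρ ((h : G) * (k : G))) := by
    rw [map_sum]
    exact Finset.sum_congr rfl fun h _ => (map_sum _ _ _).symm
  rw [htr, hsum, map_smul, smul_eq_mul, hT, LinearMap.trace_eq_contract_apply,
    contractLeft_apply]
  simp only [ContinuousLinearMap.coe_coe, innerSL_apply_apply]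
  have hz : ⟪vK, vH⟫_ℂ = (starRingEnd ℂ) ⟪vH, vK⟫_ℂ := by rw [inner_conj_symm]
  rw [hz]
  push_cast
  have hnorm : ((‖⟪vH, vK⟫_ℂ‖ : ℝ) : ℂ) ^ 2
      = ⟪vH, vK⟫_ℂ * (starRingEnd ℂ) ⟪vH, vK⟫_ℂ := by
    rw [Complex.mul_conj, Complex.normSq_eq_norm_sq]
    norm_cast
  rw [hnorm]
  field_simp
end

section
/- Let G be a finite group with subgroups H, K such that (G,H) and (G,K) are both Gelfand pairs (every irreducible representation has at most one-dimensional H-invariant and K-invariant subspaces). Then Σ_{π∈Ĝ, π^H≠0, π^K≠0} (dim π) · |⟨v_H, v_K⟩_π|² = |G|·|H∩K|/(|H|·|K|), where v_H, v_K are unit invariant vectors in π. -/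
set_option linter.unusedSectionVars false
set_option maxHeartbeats 1000000


open scoped InnerProductSpace

/-- Two representations are isomorphic. -/
def RepIso {G V W : Type} [Group G] [AddCommGroup V] [Module ℂ V] [AddCommGroup W]
    [Module ℂ W] (ρ : Representation ℂ G V) (σ : Representation ℂ G W) : Prop :=
  ∃ e : V ≃ₗ[ℂ] W, ∀ (g : G) (v : V), e (ρ g v) = σ g (e v)



open Module LinearMap

section GelAux
namespace Gel

variable {G : Type} [Group G]

theorem schur_zero {V W : Type} [AddCommGroup V] [Module ℂ V] [AddCommGroup W] [Module ℂ W]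
    (ρ : Representation ℂ G V) (σ : Representation ℂ G W)
    (hirrV : ∀ U : Submodule ℂ V, (∀ g v, v ∈ U → ρ g v ∈ U) → U = ⊥ ∨ U = ⊤)
    (hirrW : ∀ U : Submodule ℂ W, (∀ g v, v ∈ U → σ g v ∈ U) → U = ⊥ ∨ U = ⊤)
    (hniso : ¬ RepIso ρ σ)
    (T : V →ₗ[ℂ] W) (hT : ∀ g v, T (ρ g v) = σ g (T v)) : T = 0 := by
  by_contra hT0
  have hker : ker T = ⊥ := by
    rcases hirrV (ker T) (fun g v hv => by
      simp only [mem_ker] at hv ⊢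
      rw [hT, hv, map_zero]) with h | h
    · exact h
    · exact absurd (ker_eq_top.mp h) hT0
  have hrange : range T = ⊤ := by
    rcases hirrW (range T) (fun g v hv => by
      obtain ⟨u, rfl⟩ := hv
      exact ⟨ρ g u, (hT g u)⟩) with h | h
    · exact absurd (range_eq_bot.mp h) hT0
    · exact h
  exact hniso ⟨LinearEquiv.ofBijective T ⟨ker_eq_bot.mp hker, range_eq_top.mp hrange⟩,
    fun g v => hT g v⟩

theorem schur_smul_id {V : Type} [AddCommGroup V] [Module ℂ V] [FiniteDimensional ℂ V]
    [Nontrivial V] (ρ : Representation ℂ G V)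
    (hirrV : ∀ U : Submodule ℂ V, (∀ g v, v ∈ U → ρ g v ∈ U) → U = ⊥ ∨ U = ⊤)
    (T : V →ₗ[ℂ] V) (hT : ∀ g v, T (ρ g v) = ρ g (T v)) :
    ∃ c : ℂ, T = c • LinearMap.id := by
  obtain ⟨c, hc⟩ := Module.End.exists_eigenvalue T
  obtain ⟨v, hv⟩ := hc.exists_hasEigenvector
  refine ⟨c, ?_⟩
  set S := T - c • LinearMap.id with hS
  have hkmem : v ∈ ker S := by
    simp [S, mem_ker, sub_eq_zero, hv.apply_eq_smul]
  have hkerS : ker S ≠ ⊥ := by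
    intro h
    rw [h, Submodule.mem_bot] at hkmem
    exact hv.2 hkmem
  rcases hirrV (ker S) (fun g v hv => by
    simp only [mem_ker, S, LinearMap.sub_apply, LinearMap.smul_apply, id_apply, sub_eq_zero] at hv ⊢
    rw [hT, hv, map_smul]) with h | h
  · exact absurd h hkerS
  · have : S = 0 := ker_eq_top.mp h
    have := sub_eq_zero.mp this
    exact this


variable [Fintype G]

theorem sum_conj_comm {V W : Type} [AddCommGroup V] [Module ℂ V] [AddCommGroup W] [Module ℂ W]
    (ρ : Representation ℂ G V) (σ : Representation ℂ G W) (f : V →ₗ[ℂ] W) (h : G) (v : V) :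
    (∑ g : G, σ g ∘ₗ f ∘ₗ ρ g⁻¹) (ρ h v) = σ h ((∑ g : G, σ g ∘ₗ f ∘ₗ ρ g⁻¹) v) := by
  simp only [LinearMap.sum_apply, LinearMap.comp_apply, map_sum]
  refine Fintype.sum_equiv (Equiv.mulLeft h⁻¹) _ _ (fun g => ?_)
  simp only [Equiv.coe_mulLeft]
  rw [← Module.End.mul_apply (ρ g⁻¹) (ρ h), ← map_mul,
    ← Module.End.mul_apply (σ h) (σ (h⁻¹ * g)), ← map_mul, mul_inv_cancel_left, mul_inv_rev,
    inv_inv]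

theorem trace_conj_term {V : Type} [AddCommGroup V] [Module ℂ V] [FiniteDimensional ℂ V]
    (ρ : Representation ℂ G V) (f : V →ₗ[ℂ] V) (g : G) :
    trace ℂ V (ρ g ∘ₗ f ∘ₗ ρ g⁻¹) = trace ℂ V f := by
  rw [trace_comp_comm', LinearMap.comp_assoc, ← Module.End.mul_eq_comp (ρ g⁻¹) (ρ g), ← map_mul,
    inv_mul_cancel, map_one, Module.End.one_eq_id, LinearMap.comp_id]

theorem sum_conj_eq_smul {V : Type} [AddCommGroup V] [Module ℂ V] [FiniteDimensional ℂ V]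
    [Nontrivial V] (ρ : Representation ℂ G V)
    (hirrV : ∀ U : Submodule ℂ V, (∀ g v, v ∈ U → ρ g v ∈ U) → U = ⊥ ∨ U = ⊤)
    (f : V →ₗ[ℂ] V) :
    ∑ g : G, ρ g ∘ₗ f ∘ₗ ρ g⁻¹ =
      ((Fintype.card G : ℂ) * trace ℂ V f / (finrank ℂ V : ℂ)) • LinearMap.id := by
  obtain ⟨c, hc⟩ := schur_smul_id ρ hirrV (∑ g : G, ρ g ∘ₗ f ∘ₗ ρ g⁻¹)
    (fun h v => sum_conj_comm ρ ρ f h v)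
  have htr : trace ℂ V (∑ g : G, ρ g ∘ₗ f ∘ₗ ρ g⁻¹) = (Fintype.card G : ℂ) * trace ℂ V f := by
    rw [map_sum]
    simp [trace_conj_term ρ f, Finset.sum_const, nsmul_eq_mul]
  rw [hc] at htr ⊢
  have hd : (finrank ℂ V : ℂ) ≠ 0 := by
    exact_mod_cast finrank_pos.ne'
  rw [map_smul, trace_id, smul_eq_mul] at htr
  rw [← htr]
  congr 1
  field_simp


theorem trace_linHom {V W : Type} [AddCommGroup V] [Module ℂ V] [AddCommGroup W] [Module ℂ W]
    [FiniteDimensional ℂ V] [FiniteDimensional ℂ W]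
    (ρV : Representation ℂ G V) (ρW : Representation ℂ G W) (g : G) :
    trace ℂ (V →ₗ[ℂ] W) ((Representation.linHom ρV ρW) g) =
      trace ℂ V (ρV g⁻¹) * trace ℂ W (ρW g) := by
  have h := Representation.dualTensorHom_comm ρV ρW g
  set b := Module.Free.chooseBasis ℂ V
  set e := dualTensorHomEquivOfBasis (N := W) b with he'
  have h2 : ∀ z, dualTensorHom ℂ V W (TensorProduct.map (ρV.dual g) (ρW g) z) =
      (ρV.linHom ρW) g (dualTensorHom ℂ V W z) := fun z => by
    have := LinearMap.congr_fun h z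
    simpa using this
  have he : (Representation.linHom ρV ρW) g =
      e.conj (TensorProduct.map (ρV.dual g) (ρW g)) := by
    refine LinearMap.ext fun y => ?_
    rw [LinearEquiv.conj_apply]
    simp only [LinearMap.comp_apply, LinearEquiv.coe_coe]
    rw [dualTensorHomEquivOfBasis_apply, h2, dualTensorHomEquivOfBasis_symm_cancel_right]
  rw [he, trace_conj', trace_tensorProduct', Representation.dual_apply, trace_transpose']

theorem orth {V W : Type} [NormedAddCommGroup V] [InnerProductSpace ℂ V]
    [NormedAddCommGroup W] [InnerProductSpace ℂ W]
    [FiniteDimensional ℂ V] [FiniteDimensional ℂ W] [Nontrivial W]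
    (ρV : Representation ℂ G V) (ρW : Representation ℂ G W)
    (hirrV : ∀ U : Submodule ℂ V, (∀ g v, v ∈ U → ρV g v ∈ U) → U = ⊥ ∨ U = ⊤)
    (hirrW : ∀ U : Submodule ℂ W, (∀ g v, v ∈ U → ρW g v ∈ U) → U = ⊥ ∨ U = ⊤)
    (hiso : ¬ RepIso ρV ρW) :
    ∑ g : G, trace ℂ V (ρV g⁻¹) * trace ℂ W (ρW g) = 0 := by
  have : ∑ g : G, trace ℂ V (ρV g⁻¹) * trace ℂ W (ρW g) =
      trace ℂ (V →ₗ[ℂ] W) (∑ g : G, (Representation.linHom ρV ρW) g) := by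
    rw [map_sum]
    exact (Finset.sum_congr rfl fun g _ => (trace_linHom ρV ρW g).symm)
  rw [this]
  have hz : (∑ g : G, (Representation.linHom ρV ρW) g) = 0 := by
    refine LinearMap.ext fun f => ?_
    rw [LinearMap.sum_apply]
    simp only [Representation.linHom_apply, LinearMap.zero_apply]
    exact schur_zero ρV ρW hirrV hirrW hiso (∑ g : G, ρW g ∘ₗ f ∘ₗ ρV g⁻¹)
      (fun h v => sum_conj_comm ρV ρW f h v)
  rw [hz, map_zero]

theorem orth_self {V : Type} [NormedAddCommGroup V] [InnerProductSpace ℂ V]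
    [FiniteDimensional ℂ V] [Nontrivial V]
    (ρV : Representation ℂ G V)
    (hirrV : ∀ U : Submodule ℂ V, (∀ g v, v ∈ U → ρV g v ∈ U) → U = ⊥ ∨ U = ⊤) :
    ∑ g : G, trace ℂ V (ρV g⁻¹) * trace ℂ V (ρV g) = (Fintype.card G : ℂ) := by
  have h1 : ∑ g : G, trace ℂ V (ρV g⁻¹) * trace ℂ V (ρV g) =
      trace ℂ (V →ₗ[ℂ] V) (∑ g : G, (Representation.linHom ρV ρV) g) := by
    rw [map_sum]
    exact (Finset.sum_congr rfl fun g _ => (trace_linHom ρV ρV g).symm)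
  set d : ℂ := (finrank ℂ V : ℂ) with hd'
  have hd : d ≠ 0 := by
    rw [hd']
    exact_mod_cast (finrank_pos (R := ℂ) (M := V)).ne'
  have h2 : (∑ g : G, (Representation.linHom ρV ρV) g) =
      ((Fintype.card G : ℂ) / d) • (LinearMap.smulRight (trace ℂ V) (LinearMap.id (M := V))) := by
    refine LinearMap.ext fun f => ?_
    rw [LinearMap.sum_apply]
    simp only [Representation.linHom_apply, LinearMap.smul_apply, LinearMap.smulRight_apply]
    rw [sum_conj_eq_smul ρV hirrV f, smul_smul]
    congr 1
    field_simp
    rw [← hd', mul_div_assoc, div_self hd, mul_one]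
  rw [h1, h2, map_smul]
  have h3 : trace ℂ ((V →ₗ[ℂ] V))
      (LinearMap.smulRight (trace ℂ V) (LinearMap.id (M := V))) = d := by
    have : LinearMap.smulRight (trace ℂ V) (LinearMap.id (M := V)) =
        (LinearMap.toSpanSingleton ℂ (V →ₗ[ℂ] V) LinearMap.id) ∘ₗ (trace ℂ V) := by
      ext f
      simp [LinearMap.toSpanSingleton, LinearMap.smulRight_apply]
    rw [this, trace_comp_comm']
    have h4 : (trace ℂ V) ∘ₗ (LinearMap.toSpanSingleton ℂ (V →ₗ[ℂ] V) LinearMap.id) =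
        d • (LinearMap.id (M := ℂ)) := by
      ext
      simp [LinearMap.toSpanSingleton, trace_id, hd']
    rw [h4, map_smul, trace_id]
    simp [finrank_self]
  rw [h3, smul_eq_mul]
  field_simp

def subRep {W : Type} [AddCommGroup W] [Module ℂ W] (σ : Representation ℂ G W)
    (U : Submodule ℂ W) (hU : ∀ g, ∀ v ∈ U, σ g v ∈ U) : Representation ℂ G U where
  toFun g := (σ g).restrict (hU g)
  map_one' := by
    refine LinearMap.ext fun v => Subtype.ext ?_
    simp [LinearMap.restrict_apply]
  map_mul' g h := by
    refine LinearMap.ext fun v => Subtype.ext ?_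
    simp [LinearMap.restrict_apply, Module.End.mul_apply]

theorem key {ι : Type} [Fintype ι] [DecidableEq ι] (Vf : ι → Type)
    [∀ i, NormedAddCommGroup (Vf i)] [∀ i, InnerProductSpace ℂ (Vf i)]
    [∀ i, FiniteDimensional ℂ (Vf i)]
    (ρ : ∀ i, Representation ℂ G (Vf i))
    (horth : ∀ i j : ι, ∑ g : G, trace ℂ (Vf i) (ρ i g⁻¹) * trace ℂ (Vf j) (ρ j g) =
      if i = j then (Fintype.card G : ℂ) else 0)
    (hcomplete : ∀ (W : Type) (_ : AddCommGroup W) (_ : Module ℂ W),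
      FiniteDimensional ℂ W → Nontrivial W → ∀ σ : Representation ℂ G W,
        (∀ U : Submodule ℂ W, (∀ g v, v ∈ U → σ g v ∈ U) → U = ⊥ ∨ U = ⊤) →
        ∃ i, RepIso σ (ρ i)) :
    ∀ (n : ℕ) (W : Type) [NormedAddCommGroup W] [InnerProductSpace ℂ W]
      [FiniteDimensional ℂ W],
      ∀ (σ : Representation ℂ G W), (∀ g v w, ⟪σ g v, σ g w⟫_ℂ = ⟪v, w⟫_ℂ) →
      finrank ℂ W ≤ n → ∀ g : G,
      trace ℂ W (σ g) = ∑ i, ((Fintype.card G : ℂ))⁻¹ *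
        (∑ h : G, trace ℂ W (σ h) * trace ℂ (Vf i) (ρ i h⁻¹)) * trace ℂ (Vf i) (ρ i g) := by
  intro n
  induction n with
  | zero =>
    intro W _ _ _ σ hσ hrank g
    have h0 : finrank ℂ W = 0 := Nat.le_zero.mp hrank
    have htr0 : ∀ h : G, trace ℂ W (σ h) = 0 := by
      intro h
      have : Subsingleton W := finrank_zero_iff.mp h0
      rw [Subsingleton.elim (σ h) 0, map_zero]
    simp [htr0]
  | succ n IH =>
    intro W _ _ _ σ hσ hrank g
    by_cases hle : finrank ℂ W ≤ n
    · exact IH W σ hσ hle g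
    have hntW : Nontrivial W := by
      rw [← finrank_pos_iff (R := ℂ)]
      omega
    have hcard : (Fintype.card G : ℂ) ≠ 0 := Nat.cast_ne_zero.mpr Fintype.card_ne_zero
    by_cases hirrW : ∀ U : Submodule ℂ W, (∀ g v, v ∈ U → σ g v ∈ U) → U = ⊥ ∨ U = ⊤
    · obtain ⟨j, e, he⟩ := hcomplete W inferInstance inferInstance inferInstance hntW σ hirrW
      have htr : ∀ h : G, trace ℂ W (σ h) = trace ℂ (Vf j) (ρ j h) := by
        intro h
        rw [← trace_conj' (σ h) e]
        congr 1
        refine LinearMap.ext fun v => ?_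
        rw [LinearEquiv.conj_apply]
        simp [he h]
      simp_rw [htr]
      have hsum : ∀ i, (∑ h : G, trace ℂ (Vf j) (ρ j h) * trace ℂ (Vf i) (ρ i h⁻¹)) =
          if i = j then (Fintype.card G : ℂ) else 0 := by
        intro i
        rw [← horth i j]
        exact Finset.sum_congr rfl fun h _ => mul_comm _ _
      simp_rw [hsum]
      rw [Finset.sum_eq_single j (fun i _ hij => by simp [hij])
        (fun hj => absurd (Finset.mem_univ j) hj)]
      rw [if_pos rfl]
      field_simp
    · push_neg at hirrW
      obtain ⟨U, hUinv, hUbot, hUtop⟩ := hirrW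
      have hUinv' : ∀ g, ∀ v ∈ U, σ g v ∈ U := fun g v hv => hUinv g v hv
      have hOinv : ∀ g, ∀ v ∈ Uᗮ, σ g v ∈ Uᗮ := by
        intro g v hv
        rw [Submodule.mem_orthogonal] at hv ⊢
        intro u hu
        have h1 : σ g⁻¹ u ∈ U := hUinv' g⁻¹ u hu
        have h2 : ⟪u, σ g v⟫_ℂ = ⟪σ g⁻¹ u, v⟫_ℂ := by
          conv_lhs => rw [show u = σ g (σ g⁻¹ u) by
            rw [← Module.End.mul_apply, ← map_mul, mul_inv_cancel, map_one, Module.End.one_apply]]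
          rw [hσ]
        rw [h2]
        exact hv _ h1
      have hcompl : IsCompl U Uᗮ := Submodule.isCompl_orthogonal_of_hasOrthogonalProjection
      set σU := subRep σ U hUinv' with hσUdef
      set σO := subRep σ Uᗮ hOinv with hσOdef
      have hσUu : ∀ g v w, ⟪σU g v, σU g w⟫_ℂ = ⟪v, w⟫_ℂ := by
        intro g v w
        simp only [Submodule.coe_inner, hσUdef, subRep, MonoidHom.coe_mk, OneHom.coe_mk,
          LinearMap.restrict_coe_apply]
        exact hσ g v w
      have hσOu : ∀ g v w, ⟪σO g v, σO g w⟫_ℂ = ⟪v, w⟫_ℂ := by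
        intro g v w
        simp only [Submodule.coe_inner, hσOdef, subRep, MonoidHom.coe_mk, OneHom.coe_mk,
          LinearMap.restrict_coe_apply]
        exact hσ g v w
      have hrk : finrank ℂ U + finrank ℂ Uᗮ = finrank ℂ W :=
        Submodule.finrank_add_eq_of_isCompl hcompl
      have hUpos : 0 < finrank ℂ U := by
        rw [finrank_pos_iff]
        exact Submodule.nontrivial_iff_ne_bot.mpr hUbot
      have hOpos : 0 < finrank ℂ Uᗮ := by
        rw [finrank_pos_iff]
        refine Submodule.nontrivial_iff_ne_bot.mpr fun h => hUtop ?_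
        exact Submodule.orthogonal_eq_bot_iff.mp h
      have hadd : ∀ h : G, trace ℂ W (σ h) = trace ℂ U (σU h) + trace ℂ Uᗮ (σO h) := by
        intro h
        have huniv : (Set.univ : Set Bool) = {true, false} := by
          ext b
          cases b <;> simp
        have hint : DirectSum.IsInternal (fun b : Bool => bif b then U else Uᗮ) :=
          (DirectSum.isInternal_submodule_iff_isCompl _ (by simp) huniv).mpr hcompl
        have hmapsto : ∀ b : Bool,
            Set.MapsTo (σ h) (↑(bif b then U else Uᗮ)) (↑(bif b then U else Uᗮ)) := by
          intro b
          cases b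
          · exact fun v hv => hOinv h v hv
          · exact fun v hv => hUinv' h v hv
        rw [trace_eq_sum_trace_restrict hint hmapsto, Fintype.sum_bool]
        rfl
      have hUle : finrank ℂ U ≤ n := by omega
      have hOle : finrank ℂ Uᗮ ≤ n := by omega
      calc trace ℂ W (σ g) = trace ℂ U (σU g) + trace ℂ Uᗮ (σO g) := hadd g
        _ = (∑ i, ((Fintype.card G : ℂ))⁻¹ *
              (∑ h : G, trace ℂ U (σU h) * trace ℂ (Vf i) (ρ i h⁻¹)) * trace ℂ (Vf i) (ρ i g)) +
            ∑ i, ((Fintype.card G : ℂ))⁻¹ *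
              (∑ h : G, trace ℂ Uᗮ (σO h) * trace ℂ (Vf i) (ρ i h⁻¹)) * trace ℂ (Vf i) (ρ i g) := by
          rw [IH U σU hσUu hUle g, IH Uᗮ σO hσOu hOle g]
        _ = ∑ i, ((Fintype.card G : ℂ))⁻¹ *
              (∑ h : G, trace ℂ W (σ h) * trace ℂ (Vf i) (ρ i h⁻¹)) * trace ℂ (Vf i) (ρ i g) := by
          rw [← Finset.sum_add_distrib]
          refine Finset.sum_congr rfl fun i _ => ?_
          simp only [hadd, add_mul, Finset.sum_add_distrib, mul_add]

def regAux : Representation ℂ G (G → ℂ) where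
  toFun g := LinearMap.funLeft ℂ ℂ fun x => g⁻¹ * x
  map_one' := by
    refine LinearMap.ext fun v => funext fun x => ?_
    simp [LinearMap.funLeft_apply]
  map_mul' g h := by
    refine LinearMap.ext fun v => funext fun x => ?_
    simp [LinearMap.funLeft_apply, Module.End.mul_apply, mul_assoc]

noncomputable def regRep : Representation ℂ G (EuclideanSpace ℂ G) where
  toFun g := (WithLp.linearEquiv 2 ℂ (∀ _ : G, ℂ)).symm.toLinearMap ∘ₗ
    (regAux (G := G)) g ∘ₗ (WithLp.linearEquiv 2 ℂ (∀ _ : G, ℂ)).toLinearMap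
  map_one' := by
    refine LinearMap.ext fun v => ?_
    simp [map_one]
  map_mul' g h := by
    refine LinearMap.ext fun v => ?_
    simp [map_mul, Module.End.mul_apply]

theorem regRep_apply (g : G) (v : EuclideanSpace ℂ G) (x : G) :
    regRep g v x = v (g⁻¹ * x) := rfl

theorem regRep_unitary (g : G) (v w : EuclideanSpace ℂ G) :
    ⟪regRep g v, regRep g w⟫_ℂ = ⟪v, w⟫_ℂ := by
  rw [PiLp.inner_apply, PiLp.inner_apply]
  refine Fintype.sum_equiv (Equiv.mulLeft g⁻¹) _ _ (fun x => ?_)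
  simp [regRep_apply, RCLike.inner_apply]

theorem regRep_trace [DecidableEq G] (g : G) :
    trace ℂ (EuclideanSpace ℂ G) (regRep g) =
      if g = 1 then (Fintype.card G : ℂ) else 0 := by
  have h1 : trace ℂ (EuclideanSpace ℂ G) (regRep g) = trace ℂ (G → ℂ) ((regAux (G := G)) g) := by
    rw [show (regRep (G := G)) g = ((WithLp.linearEquiv 2 ℂ (∀ _ : G, ℂ)).symm).conj
        ((regAux (G := G)) g) from ?_, trace_conj']
    refine LinearMap.ext fun v => ?_
    rw [LinearEquiv.conj_apply]
    rfl
  rw [h1, trace_eq_matrix_trace ℂ (Pi.basisFun ℂ G), Matrix.trace]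
  have h2 : ∀ x : G, (LinearMap.toMatrix (Pi.basisFun ℂ G) (Pi.basisFun ℂ G)
      ((regAux (G := G)) g)).diag x = if g⁻¹ * x = x then 1 else 0 := by
    intro x
    rw [Matrix.diag_apply, LinearMap.toMatrix_apply]
    simp [regAux, LinearMap.funLeft_apply, Pi.single_apply]
  rw [Finset.sum_congr rfl fun x _ => h2 x]
  by_cases hg : g = 1
  · simp [hg, Finset.card_univ]
  · have hne : ∀ x : G, ¬(g⁻¹ * x = x) := by
      intro x hx
      apply hg
      have : g⁻¹ * x = 1 * x := by rw [hx, one_mul]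
      have h3 := mul_right_cancel this
      rw [← inv_inv g, h3, inv_one]
    simp [hne, hg]

theorem complete_sum [DecidableEq G] {ι : Type} [Fintype ι] [DecidableEq ι] (Vf : ι → Type)
    [∀ i, NormedAddCommGroup (Vf i)] [∀ i, InnerProductSpace ℂ (Vf i)]
    [∀ i, FiniteDimensional ℂ (Vf i)]
    (ρ : ∀ i, Representation ℂ G (Vf i))
    (horth : ∀ i j : ι, ∑ g : G, trace ℂ (Vf i) (ρ i g⁻¹) * trace ℂ (Vf j) (ρ j g) =
      if i = j then (Fintype.card G : ℂ) else 0)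
    (hcomplete : ∀ (W : Type) (_ : AddCommGroup W) (_ : Module ℂ W),
      FiniteDimensional ℂ W → Nontrivial W → ∀ σ : Representation ℂ G W,
        (∀ U : Submodule ℂ W, (∀ g v, v ∈ U → σ g v ∈ U) → U = ⊥ ∨ U = ⊤) →
        ∃ i, RepIso σ (ρ i))
    (g : G) :
    ∑ i, (finrank ℂ (Vf i) : ℂ) * trace ℂ (Vf i) (ρ i g) =
      if g = 1 then (Fintype.card G : ℂ) else 0 := by
  have hcard : (Fintype.card G : ℂ) ≠ 0 := Nat.cast_ne_zero.mpr Fintype.card_ne_zero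
  have hkey := key Vf ρ horth hcomplete (finrank ℂ (EuclideanSpace ℂ G))
    (EuclideanSpace ℂ G) regRep regRep_unitary le_rfl g
  simp_rw [regRep_trace] at hkey
  rw [hkey]
  refine Finset.sum_congr rfl fun i _ => ?_
  have hin : (∑ h : G, (if h = 1 then (Fintype.card G : ℂ) else 0) *
      trace ℂ (Vf i) (ρ i h⁻¹)) = (Fintype.card G : ℂ) * (finrank ℂ (Vf i) : ℂ) := by
    rw [Finset.sum_congr rfl (fun h _ => ite_mul (h = 1) ((Fintype.card G : ℂ)) 0 _)]
    simp only [zero_mul]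
    rw [Finset.sum_ite_eq' Finset.univ (1 : G)
      (fun h => (Fintype.card G : ℂ) * trace ℂ (Vf i) (ρ i h⁻¹))]
    simp [map_one, trace_one]
  rw [hin]
  field_simp

theorem proj_sum {V : Type} [NormedAddCommGroup V] [InnerProductSpace ℂ V]
    [FiniteDimensional ℂ V]
    (ρ : Representation ℂ G V) (H : Subgroup G) [Fintype H]
    (hinv : ∀ (g : G) (v w : V), ⟪ρ g v, ρ g w⟫_ℂ = ⟪v, w⟫_ℂ)
    (hGel : finrank ℂ (fixedSpace ρ H) ≤ 1)
    (v0 : V) (hv0 : v0 ∈ fixedSpace ρ H)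
    (hv01 : fixedSpace ρ H ≠ ⊥ → ‖v0‖ = 1)
    (hv00 : fixedSpace ρ H = ⊥ → v0 = 0)
    (x : V) :
    (∑ h : H, ρ (h : G)) x = ((Fintype.card H : ℂ) * ⟪v0, x⟫_ℂ) • v0 := by
  have hmem : (∑ h : H, ρ (h : G)) x ∈ fixedSpace ρ H := by
    intro h₀ hh₀
    rw [LinearMap.sum_apply, map_sum]
    refine Fintype.sum_equiv (Equiv.mulLeft (⟨h₀, hh₀⟩ : H)) _ _ (fun h => ?_)
    rw [Equiv.coe_mulLeft, ← Module.End.mul_apply, ← map_mul]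
    rfl
  by_cases hbot : fixedSpace ρ H = ⊥
  · rw [hv00 hbot]
    rw [hbot] at hmem
    rw [Submodule.mem_bot] at hmem
    rw [hmem, smul_zero]
  · have hn1 : ‖v0‖ = 1 := hv01 hbot
    have hv0ne : v0 ≠ 0 := by
      intro h
      rw [h, norm_zero] at hn1
      norm_num at hn1
    have hrank1 : finrank ℂ (fixedSpace ρ H) = 1 := by
      refine le_antisymm hGel ?_
      have : Nontrivial (fixedSpace ρ H) := Submodule.nontrivial_iff_ne_bot.mpr hbot
      exact finrank_pos_iff.mpr this
    have hspan : (ℂ ∙ v0) = fixedSpace ρ H := by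
      refine Submodule.eq_of_le_of_finrank_le ((Submodule.span_singleton_le_iff_mem _ _).mpr hv0)
        ?_
      rw [hrank1, finrank_span_singleton hv0ne]
    obtain ⟨c, hc⟩ := Submodule.mem_span_singleton.mp (hspan ▸ hmem)
    have hinner : ⟪v0, (∑ h : H, ρ (h : G)) x⟫_ℂ = (Fintype.card H : ℂ) * ⟪v0, x⟫_ℂ := by
      rw [LinearMap.sum_apply, inner_sum]
      have hterm : ∀ h : H, ⟪v0, ρ (h : G) x⟫_ℂ = ⟪v0, x⟫_ℂ := by
        intro h
        conv_lhs => rw [show v0 = ρ (h : G) v0 from (hv0 h h.2).symm]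
        exact hinv h v0 x
      rw [Finset.sum_congr rfl fun h _ => hterm h, Finset.sum_const, Finset.card_univ,
        nsmul_eq_mul]
    have hcval : c = (Fintype.card H : ℂ) * ⟪v0, x⟫_ℂ := by
      rw [← hinner, ← hc, inner_smul_right, inner_self_eq_norm_sq_to_K, hn1]
      norm_num
    rw [← hc, hcval]

theorem trace_smulRight' {V : Type} [AddCommGroup V] [Module ℂ V] [FiniteDimensional ℂ V]
    (ℓ : V →ₗ[ℂ] ℂ) (v : V) : trace ℂ V (LinearMap.smulRight ℓ v) = ℓ v := by
  have h1 : LinearMap.smulRight ℓ v = (LinearMap.toSpanSingleton ℂ V v) ∘ₗ ℓ := by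
    refine LinearMap.ext fun x => ?_
    simp [LinearMap.toSpanSingleton, LinearMap.smulRight_apply]
  rw [h1, trace_comp_comm']
  have h2 : ℓ ∘ₗ (LinearMap.toSpanSingleton ℂ V v) = (ℓ v) • (LinearMap.id (M := ℂ)) := by
    refine LinearMap.ext fun c => ?_
    simp [LinearMap.toSpanSingleton]
    ring
  rw [h2, map_smul, trace_id]
  simp [finrank_self]

theorem count_pairs [DecidableEq G] (H K : Subgroup G) [Fintype H] [Fintype K]
    [Fintype ↥(H ⊓ K)] :
    ∑ h : H, ∑ k : K, (if (h : G) * (k : G) = 1 then (Fintype.card G : ℂ) else 0) =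
      (Fintype.card G : ℂ) * (Fintype.card ↥(H ⊓ K) : ℂ) := by
  classical
  have hinner : ∀ h : H, (∑ k : K, (if (h : G) * (k : G) = 1 then (Fintype.card G : ℂ) else 0)) =
      if (h : G) ∈ K then (Fintype.card G : ℂ) else 0 := by
    intro h
    by_cases hk : ((h : G))⁻¹ ∈ K
    · rw [if_pos ((inv_mem_iff (x := (h : G))).mp hk)]
      rw [Finset.sum_eq_single (⟨((h : G))⁻¹, hk⟩ : K)]
      · rw [if_pos (by simp)]
      · intro k _ hne
        rw [if_neg]
        intro heq
        exact hne (Subtype.ext (eq_inv_of_mul_eq_one_right heq))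
      · intro hmem
        exact absurd (Finset.mem_univ _) hmem
    · rw [if_neg (fun hmem => hk ((inv_mem_iff (x := (h : G))).mpr hmem))]
      refine Finset.sum_eq_zero fun k _ => ?_
      rw [if_neg]
      intro heq
      exact hk ((eq_inv_of_mul_eq_one_right heq) ▸ k.2)
  rw [Finset.sum_congr rfl fun h _ => hinner h]
  rw [Finset.sum_ite, Finset.sum_const, Finset.sum_const, smul_zero, add_zero]
  have hcount : (Finset.univ.filter (fun h : H => (h : G) ∈ K)).card =
      Fintype.card ↥(H ⊓ K) := by
    rw [← Fintype.card_subtype]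
    refine Fintype.card_congr ⟨fun h => ⟨(h.1 : G), ⟨h.1.2, h.2⟩⟩,
      fun x => ⟨⟨(x : G), x.2.1⟩, x.2.2⟩, fun h => by ext; rfl, fun x => by ext; rfl⟩
  rw [hcount, nsmul_eq_mul, mul_comm]

end Gel
end GelAux

open Module LinearMap


/-- Let `G` be a finite group with Gelfand subgroups `H, K`. Summing over a complete
family of pairwise non-isomorphic irreducible complex representations of `G` (with unit
invariant vectors `v_H, v_K` chosen whenever the corresponding invariant space is nonzero
and `0` otherwise), one has
`∑_π (dim π) |⟨v_H, v_K⟩_π|² = |G| |H ∩ K| / (|H| |K|)`;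
representations without nonzero `H`- and `K`-invariant vectors contribute `0`. -/
theorem stmt_1 {G : Type} [Group G] [Fintype G] (H K : Subgroup G)
    [Fintype H] [Fintype K] [Fintype ↥(H ⊓ K)]
    (ι : Type) [Fintype ι] (V : ι → Type)
    [∀ i, NormedAddCommGroup (V i)] [∀ i, InnerProductSpace ℂ (V i)]
    [∀ i, FiniteDimensional ℂ (V i)]
    (ρ : ∀ i, Representation ℂ G (V i))
    (hirr : ∀ i (U : Submodule ℂ (V i)), (∀ g v, v ∈ U → ρ i g v ∈ U) → U = ⊥ ∨ U = ⊤)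
    (hnontriv : ∀ i, Nontrivial (V i))
    (hinv : ∀ i (g : G) (v w : V i), ⟪ρ i g v, ρ i g w⟫_ℂ = ⟪v, w⟫_ℂ)
    (hcomplete : ∀ (W : Type) (_ : AddCommGroup W) (_ : Module ℂ W),
      FiniteDimensional ℂ W → Nontrivial W → ∀ σ : Representation ℂ G W,
        (∀ U : Submodule ℂ W, (∀ g v, v ∈ U → σ g v ∈ U) → U = ⊥ ∨ U = ⊤) →
        ∃ i, RepIso σ (ρ i))
    (hdistinct : ∀ i j, i ≠ j → ¬ RepIso (ρ i) (ρ j))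
    (hGelfandH : ∀ i, Module.finrank ℂ (fixedSpace (ρ i) H) ≤ 1)
    (hGelfandK : ∀ i, Module.finrank ℂ (fixedSpace (ρ i) K) ≤ 1)
    (vH vK : ∀ i, V i)
    (hvH : ∀ i, vH i ∈ fixedSpace (ρ i) H) (hvK : ∀ i, vK i ∈ fixedSpace (ρ i) K)
    (hvH1 : ∀ i, fixedSpace (ρ i) H ≠ ⊥ → ‖vH i‖ = 1)
    (hvK1 : ∀ i, fixedSpace (ρ i) K ≠ ⊥ → ‖vK i‖ = 1)
    (hvH0 : ∀ i, fixedSpace (ρ i) H = ⊥ → vH i = 0)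
    (hvK0 : ∀ i, fixedSpace (ρ i) K = ⊥ → vK i = 0) :
    ∑ i, (Module.finrank ℂ (V i) : ℝ) * ‖⟪vH i, vK i⟫_ℂ‖ ^ 2 =
      (Fintype.card G : ℝ) * (Fintype.card ↥(H ⊓ K) : ℝ) /
        ((Fintype.card H : ℝ) * (Fintype.card K : ℝ)) := by
  classical
  haveI : ∀ i, Nontrivial (V i) := hnontriv
  have horth : ∀ i j, ∑ g : G, trace ℂ (V i) (ρ i g⁻¹) * trace ℂ (V j) (ρ j g) =
      if i = j then (Fintype.card G : ℂ) else 0 := by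
    intro i j
    by_cases hij : i = j
    · subst hij
      rw [if_pos rfl]
      exact Gel.orth_self (ρ i) (hirr i)
    · rw [if_neg hij]
      exact Gel.orth (ρ i) (ρ j) (hirr i) (hirr j) (hdistinct i j hij)
  have hcs := Gel.complete_sum V ρ horth hcomplete
  have hPH : ∀ i (x : V i), (∑ h : H, ρ i (h : G)) x =
      ((Fintype.card H : ℂ) * ⟪vH i, x⟫_ℂ) • vH i :=
    fun i x => Gel.proj_sum (ρ i) H (hinv i) (hGelfandH i) (vH i) (hvH i) (hvH1 i) (hvH0 i) x
  have hPK : ∀ i (x : V i), (∑ k : K, ρ i (k : G)) x =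
      ((Fintype.card K : ℂ) * ⟪vK i, x⟫_ℂ) • vK i :=
    fun i x => Gel.proj_sum (ρ i) K (hinv i) (hGelfandK i) (vK i) (hvK i) (hvK1 i) (hvK0 i) x
  have htrHK : ∀ i, trace ℂ (V i) ((∑ h : H, ρ i (h : G)) * (∑ k : K, ρ i (k : G))) =
      (Fintype.card H : ℂ) * (Fintype.card K : ℂ) *
        (⟪vH i, vK i⟫_ℂ * ⟪vK i, vH i⟫_ℂ) := by
    intro i
    have hcomp : (∑ h : H, ρ i (h : G)) * (∑ k : K, ρ i (k : G)) =
        LinearMap.smulRight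
          (((Fintype.card H : ℂ) * (Fintype.card K : ℂ) * ⟪vH i, vK i⟫_ℂ) •
            ((innerSL ℂ (vK i)).toLinearMap)) (vH i) := by
      refine LinearMap.ext fun x => ?_
      rw [Module.End.mul_apply, hPK i x, map_smul, hPH i (vK i), LinearMap.smulRight_apply]
      simp only [LinearMap.smul_apply, ContinuousLinearMap.coe_coe, innerSL_apply_apply,
        smul_eq_mul, smul_smul]
      congr 1
      ring
    rw [hcomp, Gel.trace_smulRight']
    simp only [LinearMap.smul_apply, ContinuousLinearMap.coe_coe, innerSL_apply_apply, smul_eq_mul]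
    ring
  have hsum1 : ∀ i, ∑ h : H, ∑ k : K, trace ℂ (V i) (ρ i ((h : G) * (k : G))) =
      trace ℂ (V i) ((∑ h : H, ρ i (h : G)) * (∑ k : K, ρ i (k : G))) := by
    intro i
    rw [Finset.sum_mul_sum, map_sum]
    refine Finset.sum_congr rfl fun h _ => ?_
    rw [map_sum]
    refine Finset.sum_congr rfl fun k _ => ?_
    rw [map_mul]
  have hmain : (Fintype.card H : ℂ) * (Fintype.card K : ℂ) *
      ∑ i, (finrank ℂ (V i) : ℂ) * (⟪vH i, vK i⟫_ℂ * ⟪vK i, vH i⟫_ℂ) =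
      (Fintype.card G : ℂ) * (Fintype.card ↥(H ⊓ K) : ℂ) := by
    have h1 : ∑ h : H, ∑ k : K, ∑ i, (finrank ℂ (V i) : ℂ) *
        trace ℂ (V i) (ρ i ((h : G) * (k : G))) =
        ∑ h : H, ∑ k : K, (if (h : G) * (k : G) = 1 then (Fintype.card G : ℂ) else 0) := by
      refine Finset.sum_congr rfl fun h _ => Finset.sum_congr rfl fun k _ => ?_
      exact hcs ((h : G) * (k : G))
    rw [Gel.count_pairs H K] at h1
    have h2 : ∑ h : H, ∑ k : K, ∑ i, (finrank ℂ (V i) : ℂ) *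
        trace ℂ (V i) (ρ i ((h : G) * (k : G))) =
        ∑ i, (finrank ℂ (V i) : ℂ) *
          (∑ h : H, ∑ k : K, trace ℂ (V i) (ρ i ((h : G) * (k : G)))) := by
      rw [Finset.sum_congr rfl fun (h : H) (_ : h ∈ Finset.univ) =>
        Finset.sum_comm (γ := K) (α := ι), Finset.sum_comm]
      simp only [Finset.mul_sum]
    rw [h2] at h1
    rw [← h1]
    rw [Finset.mul_sum]
    refine Finset.sum_congr rfl fun i _ => ?_
    rw [hsum1 i, htrHK i]
    ring
  have hfin : ∀ i, ⟪vH i, vK i⟫_ℂ * ⟪vK i, vH i⟫_ℂ =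
      ((‖⟪vH i, vK i⟫_ℂ‖ ^ 2 : ℝ) : ℂ) := by
    intro i
    have hconj : ⟪vK i, vH i⟫_ℂ = (starRingEnd ℂ) ⟪vH i, vK i⟫_ℂ :=
      (inner_conj_symm (vK i) (vH i)).symm
    rw [hconj, Complex.mul_conj, Complex.normSq_eq_norm_sq]
  simp_rw [hfin] at hmain
  have hH0 : (Fintype.card H : ℝ) ≠ 0 := Nat.cast_ne_zero.mpr Fintype.card_ne_zero
  have hK0 : (Fintype.card K : ℝ) ≠ 0 := Nat.cast_ne_zero.mpr Fintype.card_ne_zero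
  rw [eq_div_iff (mul_ne_zero hH0 hK0)]
  apply Complex.ofReal_injective
  push_cast at hmain ⊢
  linear_combination hmain
end

section
/- Let G be a finite group and H a Gelfand subgroup. For an irreducible complex representation π of G, considering the irreducible representation π⊗π^∨ of G×G with the diagonal subgroup ΔG and the subgroup H×H, the correlation constant c(π⊗π^∨; ΔG, H×H) = |⟨v_{H×H}, v_{ΔG}⟩|² equals 1/(dim π). -/
open scoped InnerProductSpace

/-- Let `G` be a finite group, `H` a Gelfand subgroup, and `π` an irreducible complex
representation of `G` with `π^H ≠ 0`. Realizing `π ⊗ π^∨` as a representation `τ` of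
`G × G` on `End(V)` (via an isomorphism `e` with `τ(g,h)` corresponding to
`A ↦ ρ(g) ∘ A ∘ ρ(h)⁻¹`), with unit invariant vectors `v_{H×H}` for `H × H` and `v_{ΔG}`
for the diagonal copy of `G`, the correlation constant satisfies
`|⟨v_{H×H}, v_{ΔG}⟩|² = 1/dim π`. -/
theorem stmt_2 {G : Type} [Group G] [Fintype G] (H : Subgroup G)
    {V : Type} [AddCommGroup V] [Module ℂ V] [FiniteDimensional ℂ V] [Nontrivial V]
    (ρ : Representation ℂ G V)
    (hirr : ∀ U : Submodule ℂ V, (∀ g v, v ∈ U → ρ g v ∈ U) → U = ⊥ ∨ U = ⊤)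
    (hGelfandH : ∀ (W : Type) (_ : AddCommGroup W) (_ : Module ℂ W),
      FiniteDimensional ℂ W → ∀ σ : Representation ℂ G W,
        (∀ U : Submodule ℂ W, (∀ g v, v ∈ U → σ g v ∈ U) → U = ⊥ ∨ U = ⊤) →
        Module.finrank ℂ (fixedSpace σ H) ≤ 1)
    (hne : fixedSpace ρ H ≠ ⊥)
    {W : Type} [NormedAddCommGroup W] [InnerProductSpace ℂ W]
    (τ : Representation ℂ (G × G) W)
    (e : W ≃ₗ[ℂ] (V →ₗ[ℂ] V))
    (he : ∀ (g h : G) (w : W), e (τ (g, h) w) = ρ g ∘ₗ e w ∘ₗ ρ h⁻¹)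
    (hτinv : ∀ (p : G × G) (w w' : W), ⟪τ p w, τ p w'⟫_ℂ = ⟪w, w'⟫_ℂ)
    (vHH vD : W) (hvHH1 : ‖vHH‖ = 1) (hvD1 : ‖vD‖ = 1)
    (hvHH : ∀ h₁ ∈ H, ∀ h₂ ∈ H, τ (h₁, h₂) vHH = vHH)
    (hvD : ∀ g : G, τ (g, g) vD = vD) :
    ‖⟪vHH, vD⟫_ℂ‖ ^ 2 = 1 / (Module.finrank ℂ V : ℝ) := by
  classical
  haveI : Fintype H := Fintype.ofFinite _
  set n : ℕ := Module.finrank ℂ V with hn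
  have hn0 : 0 < n := Module.finrank_pos
  set m : ℕ := Fintype.card H with hm
  have hm0 : 0 < m := Fintype.card_pos
  have hmC : (m : ℂ) ≠ 0 := by exact_mod_cast hm0.ne'
  have hnC : (n : ℂ) ≠ 0 := by exact_mod_cast hn0.ne'
  set N : ℕ := Fintype.card G with hN
  have hNC : (N : ℂ) ≠ 0 := by exact_mod_cast Fintype.card_pos.ne'
  -- Schur's lemma
  have schur : ∀ T : V →ₗ[ℂ] V, (∀ g : G, ρ g * T = T * ρ g) →
      ∃ μ : ℂ, T = μ • (1 : V →ₗ[ℂ] V) := by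
    intro T hT
    obtain ⟨μ, hμ⟩ := Module.End.exists_eigenvalue T
    refine ⟨μ, ?_⟩
    have hinv : ∀ g v, v ∈ Module.End.eigenspace T μ → ρ g v ∈ Module.End.eigenspace T μ := by
      intro g v hv
      rw [Module.End.mem_eigenspace_iff] at hv ⊢
      calc T (ρ g v) = (T * ρ g) v := rfl
        _ = (ρ g * T) v := by rw [hT]
        _ = ρ g (T v) := rfl
        _ = μ • ρ g v := by rw [hv, map_smul]
    rcases hirr _ hinv with hbot | htop
    · exact absurd hbot hμ
    · ext v
      have hv : v ∈ Module.End.eigenspace T μ := htop ▸ Submodule.mem_top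
      simpa [Module.End.mem_eigenspace_iff] using hv
  -- dim of fixed space is one
  have hfix1 : Module.finrank ℂ (fixedSpace ρ H) = 1 := by
    have hle := hGelfandH V inferInstance inferInstance inferInstance ρ hirr
    have hpos : 0 < Module.finrank ℂ (fixedSpace ρ H) := by
      rcases Nat.eq_zero_or_pos (Module.finrank ℂ (fixedSpace ρ H)) with h0 | h
      · exact absurd (Submodule.finrank_eq_zero.mp h0) hne
      · exact h
    omega
  obtain ⟨u, huH, hu0⟩ := Submodule.exists_mem_ne_zero_of_ne_bot hne
  have hspan : fixedSpace ρ H = Submodule.span ℂ {u} := by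
    refine (Submodule.eq_of_le_of_finrank_le ?_ ?_).symm
    · rw [Submodule.span_le, Set.singleton_subset_iff]; exact huH
    · rw [hfix1, finrank_span_singleton hu0]
  -- the averaging operator S
  set S : V →ₗ[ℂ] V := ∑ h : H, ρ (h : G) with hSdef
  have hSl : ∀ h ∈ H, ρ h * S = S := by
    intro h hh
    rw [hSdef, Finset.mul_sum]
    exact Fintype.sum_equiv (Equiv.mulLeft (⟨h, hh⟩ : H)) _ _ (fun x => by simp [← map_mul])
  have hSr : ∀ h ∈ H, S * ρ h = S := by
    intro h hh
    rw [hSdef, Finset.sum_mul]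
    exact Fintype.sum_equiv (Equiv.mulRight (⟨h, hh⟩ : H)) _ _ (fun x => by simp [← map_mul])
  have hSinv : ∀ h₁ : H, (∑ h₂ : H, ρ ((h₁ : G) * (h₂ : G)⁻¹)) = S := by
    intro h₁
    rw [hSdef]
    exact Fintype.sum_equiv ((Equiv.inv H).trans (Equiv.mulLeft h₁)) _ _ (fun x => by simp)
  have hSmem : ∀ v : V, S v ∈ fixedSpace ρ H := by
    intro v h hh
    calc ρ h (S v) = (ρ h * S) v := rfl
      _ = S v := by rw [hSl h hh]
  have hSfix : ∀ v ∈ fixedSpace ρ H, S v = (m : ℂ) • v := by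
    intro v hv
    rw [hSdef]
    have : ∀ h : H, ρ (h : G) v = v := fun h => hv h h.2
    simp only [LinearMap.coe_sum, Finset.sum_apply, this, Finset.sum_const,
      Finset.card_univ, ← hm]
    rw [Nat.cast_smul_eq_nsmul]
  -- trace of S is m
  have htrS : LinearMap.trace ℂ V S = (m : ℂ) := by
    have hproj : LinearMap.IsProj (fixedSpace ρ H) ((m : ℂ)⁻¹ • S) := by
      constructor
      · intro v
        exact Submodule.smul_mem _ _ (hSmem v)
      · intro v hv
        rw [LinearMap.smul_apply, hSfix v hv, smul_smul, inv_mul_cancel₀ hmC, one_smul]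
    have := hproj.trace
    rw [map_smul, hfix1, Nat.cast_one, smul_eq_mul] at this
    field_simp at this
    exact this
  -- A = e vHH
  set A : V →ₗ[ℂ] V := e vHH with hA
  have key : ∀ h₁ ∈ H, ∀ h₂ ∈ H, ρ h₁ * A * ρ h₂⁻¹ = A := by
    intro h₁ hh₁ h₂ hh₂
    have h := he h₁ h₂ vHH
    rw [hvHH h₁ hh₁ h₂ hh₂] at h
    ext v
    exact (LinearMap.congr_fun h v).symm
  have hAl : ∀ h ∈ H, ρ h * A = A := by
    intro h hh
    have := key h hh 1 H.one_mem
    simpa using this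
  have hAr : ∀ h ∈ H, A * ρ h = A := by
    intro h hh
    have := key 1 H.one_mem h⁻¹ (H.inv_mem hh)
    simpa using this
  have hAmem : ∀ v : V, A v ∈ fixedSpace ρ H := by
    intro v h hh
    calc ρ h (A v) = (ρ h * A) v := rfl
      _ = A v := by rw [hAl h hh]
  -- A u = a • u
  obtain ⟨a, ha⟩ : ∃ a : ℂ, A u = a • u := by
    have := hAmem u
    rw [hspan, Submodule.mem_span_singleton] at this
    obtain ⟨a, ha⟩ := this
    exact ⟨a, ha.symm⟩
  -- m • A = a • S
  have hmA : (m : ℂ) • A = a • S := by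
    ext v
    have h1 : A (S v) = ((m : ℂ) • A) v := by
      have : A * S = (m : ℂ) • A := by
        calc A * S = ∑ h : H, A * ρ (h : G) := by rw [hSdef, Finset.mul_sum]
          _ = ∑ _h : H, A := by
              refine Finset.sum_congr rfl (fun h _ => hAr _ h.2)
          _ = (m : ℂ) • A := by
              simp only [Finset.sum_const, Finset.card_univ, ← hm]
              rw [Nat.cast_smul_eq_nsmul]
      calc A (S v) = (A * S) v := rfl
        _ = ((m : ℂ) • A) v := by rw [this]
    have h2 : S v ∈ Submodule.span ℂ {u} := hspan ▸ hSmem v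
    obtain ⟨s, hs⟩ := Submodule.mem_span_singleton.mp h2
    have h3 : A (S v) = a • S v := by
      rw [← hs, map_smul, ha, smul_comm]
    rw [h1] at h3
    simpa using h3
  -- trace of A is a
  have htrA : LinearMap.trace ℂ V A = a := by
    have := congrArg (LinearMap.trace ℂ V) hmA
    rw [map_smul, map_smul, htrS, smul_eq_mul, smul_eq_mul] at this
    exact mul_left_cancel₀ hmC (this.trans (mul_comm a (m : ℂ)))
  -- D = e vD = c • 1, Schur
  set D : V →ₗ[ℂ] V := e vD with hD
  have hDg : ∀ g : G, ρ g * D = D * ρ g := by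
    intro g
    have h := he g g vD
    rw [hvD g] at h
    -- h : D = ρ g ∘ₗ D ∘ₗ ρ g⁻¹
    have h2 : D * ρ g = ρ g * D * (ρ g⁻¹ * ρ g) := by
      ext v
      exact LinearMap.congr_fun h (ρ g v)
    rw [← map_mul, inv_mul_cancel, map_one, mul_one] at h2
    exact h2.symm
  obtain ⟨c, hc⟩ := schur D hDg
  have hc0 : c ≠ 0 := by
    intro h0
    rw [h0, zero_smul] at hc
    have : vD = 0 := by
      have := hc
      rw [hD] at this
      simpa using congrArg e.symm this
    rw [this, norm_zero] at hvD1
    exact one_ne_zero hvD1.symm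
  -- part 1: diagonal average
  set TT : V →ₗ[ℂ] V := ∑ g : G, e (τ (g, g) vHH) with hTT
  have hTTterm : ∀ g : G, e (τ (g, g) vHH) = ρ g * A * ρ g⁻¹ := by
    intro g
    rw [he g g vHH, ← hA]
    rfl
  have hTTcomm : ∀ g₀ : G, ρ g₀ * TT = TT * ρ g₀ := by
    intro g₀
    rw [hTT, Finset.mul_sum, Finset.sum_mul]
    refine Fintype.sum_equiv (Equiv.mulLeft g₀) _ _ (fun g => ?_)
    rw [hTTterm, hTTterm]
    have hcan : ρ g₀⁻¹ * ρ g₀ = 1 := by rw [← map_mul]; simp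
    simp only [Equiv.coe_mulLeft, map_mul, mul_inv_rev, mul_assoc, hcan, mul_one]
  obtain ⟨μ, hμ⟩ := schur TT hTTcomm
  have htrTT : (μ : ℂ) * n = N * a := by
    have h1 : LinearMap.trace ℂ V TT = N * a := by
      rw [hTT, map_sum]
      have : ∀ g : G, LinearMap.trace ℂ V (e (τ (g, g) vHH)) = a := by
        intro g
        rw [hTTterm, LinearMap.trace_mul_comm, ← mul_assoc, ← map_mul, inv_mul_cancel,
          map_one, one_mul, htrA]
      simp only [this, Finset.sum_const, Finset.card_univ, ← hN, smul_eq_mul, Nat.cast_mul,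
        nsmul_eq_mul]
    rw [hμ, map_smul, LinearMap.trace_one, smul_eq_mul] at h1
    rw [h1]
  -- c • w = μ • vD where w = ∑ τ(g,g) vHH
  set w : W := ∑ g : G, τ (g, g) vHH with hw
  have hcw : c • w = μ • vD := by
    apply e.injective
    rw [map_smul, map_smul, hw, map_sum, ← hTT, hμ, ← hD, hc]
    rw [smul_comm]
  have hinnerw : ⟪vD, w⟫_ℂ = (N : ℂ) * ⟪vD, vHH⟫_ℂ := by
    rw [hw, inner_sum]
    have : ∀ g : G, ⟪vD, τ (g, g) vHH⟫_ℂ = ⟪vD, vHH⟫_ℂ := by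
      intro g
      have h1 : τ (g, g) (τ (g⁻¹, g⁻¹) vD) = vD := by
        rw [← hvD g⁻¹]
        calc τ (g, g) (τ (g⁻¹, g⁻¹) (τ (g⁻¹, g⁻¹) vD))
            = (τ (g, g) * τ (g⁻¹, g⁻¹)) (τ (g⁻¹, g⁻¹) vD) := rfl
          _ = τ (g⁻¹, g⁻¹) vD := by rw [← map_mul]; simp [← Prod.one_eq_mk]
      calc ⟪vD, τ (g, g) vHH⟫_ℂ = ⟪τ (g, g) (τ (g⁻¹, g⁻¹) vD), τ (g, g) vHH⟫_ℂ := by rw [h1]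
        _ = ⟪τ (g⁻¹, g⁻¹) vD, vHH⟫_ℂ := hτinv _ _ _
        _ = ⟪vD, vHH⟫_ℂ := by rw [hvD g⁻¹]
    simp only [this, Finset.sum_const, Finset.card_univ, ← hN, nsmul_eq_mul]
  have hvDvD : ⟪vD, vD⟫_ℂ = 1 := by
    rw [inner_self_eq_norm_sq_to_K, hvD1]
    norm_num
  have heq1 : c * ((N : ℂ) * ⟪vD, vHH⟫_ℂ) = μ := by
    calc c * ((N : ℂ) * ⟪vD, vHH⟫_ℂ) = c * ⟪vD, w⟫_ℂ := by rw [hinnerw]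
      _ = ⟪vD, c • w⟫_ℂ := (inner_smul_right _ _ _).symm
      _ = ⟪vD, μ • vD⟫_ℂ := by rw [hcw]
      _ = μ * ⟪vD, vD⟫_ℂ := inner_smul_right _ _ _
      _ = μ := by rw [hvDvD, mul_one]
  -- part 2: H × H average
  set w2 : W := ∑ h₁ : H, ∑ h₂ : H, τ ((h₁ : G), (h₂ : G)) vD with hw2
  have hterm : ∀ h₁ h₂ : H, e (τ ((h₁ : G), (h₂ : G)) vD) = c • ρ ((h₁ : G) * (h₂ : G)⁻¹) := by
    intro h₁ h₂
    rw [he, ← hD, hc]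
    ext v
    simp [map_mul]
  have hew2 : e w2 = (c * m) • S := by
    rw [hw2, map_sum]
    have : ∀ h₁ : H, (∑ h₂ : H, e (τ ((h₁ : G), (h₂ : G)) vD)) = c • S := by
      intro h₁
      simp only [hterm]
      rw [← Finset.smul_sum, hSinv]
    simp only [map_sum, this, Finset.sum_const, Finset.card_univ, ← hm]
    rw [← Nat.cast_smul_eq_nsmul ℂ, smul_smul, mul_comm]
  have haw2 : a • w2 = (c * m * m) • vHH := by
    apply e.injective
    rw [map_smul, map_smul, hew2, ← hA, smul_smul]
    rw [show a * (c * (m : ℂ)) = (c * (m : ℂ)) * a by ring, ← smul_smul, ← hmA, smul_smul]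
  have hinner2 : ⟪vHH, w2⟫_ℂ = ((m : ℂ) * m) * ⟪vHH, vD⟫_ℂ := by
    rw [hw2, inner_sum]
    have hper : ∀ h₁ h₂ : H, ⟪vHH, τ ((h₁ : G), (h₂ : G)) vD⟫_ℂ = ⟪vHH, vD⟫_ℂ := by
      intro h₁ h₂
      have hfix : τ (((h₁ : G))⁻¹, ((h₂ : G))⁻¹) vHH = vHH :=
        hvHH _ (H.inv_mem h₁.2) _ (H.inv_mem h₂.2)
      have h1 : τ ((h₁ : G), (h₂ : G)) (τ (((h₁ : G))⁻¹, ((h₂ : G))⁻¹) vHH) = vHH := by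
        rw [← hfix]
        calc τ ((h₁ : G), (h₂ : G)) (τ (((h₁ : G))⁻¹, ((h₂ : G))⁻¹) (τ (((h₁ : G))⁻¹, ((h₂ : G))⁻¹) vHH))
            = (τ ((h₁ : G), (h₂ : G)) * τ (((h₁ : G))⁻¹, ((h₂ : G))⁻¹))
                (τ (((h₁ : G))⁻¹, ((h₂ : G))⁻¹) vHH) := rfl
          _ = τ (((h₁ : G))⁻¹, ((h₂ : G))⁻¹) vHH := by rw [← map_mul]; simp [← Prod.one_eq_mk]
      calc ⟪vHH, τ ((h₁ : G), (h₂ : G)) vD⟫_ℂ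
          = ⟪τ ((h₁ : G), (h₂ : G)) (τ (((h₁ : G))⁻¹, ((h₂ : G))⁻¹) vHH),
              τ ((h₁ : G), (h₂ : G)) vD⟫_ℂ := by rw [h1]
        _ = ⟪τ (((h₁ : G))⁻¹, ((h₂ : G))⁻¹) vHH, vD⟫_ℂ := hτinv _ _ _
        _ = ⟪vHH, vD⟫_ℂ := by rw [hfix]
    have : ∀ h₁ : H, (∑ h₂ : H, ⟪vHH, τ ((h₁ : G), (h₂ : G)) vD⟫_ℂ) = (m : ℂ) * ⟪vHH, vD⟫_ℂ := by
      intro h₁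
      simp only [inner_sum, hper, Finset.sum_const, Finset.card_univ, ← hm, nsmul_eq_mul]
    simp only [inner_sum, this, Finset.sum_const, Finset.card_univ, ← hm, nsmul_eq_mul]
    ring
  have hvHHvHH : ⟪vHH, vHH⟫_ℂ = 1 := by
    rw [inner_self_eq_norm_sq_to_K, hvHH1]
    norm_num
  have heq2 : a * ⟪vHH, vD⟫_ℂ = c := by
    have h1 : a * (((m : ℂ) * m) * ⟪vHH, vD⟫_ℂ) = c * ((m : ℂ) * m) := by
      calc a * (((m : ℂ) * m) * ⟪vHH, vD⟫_ℂ) = a * ⟪vHH, w2⟫_ℂ := by rw [hinner2]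
        _ = ⟪vHH, a • w2⟫_ℂ := (inner_smul_right _ _ _).symm
        _ = ⟪vHH, (c * m * m) • vHH⟫_ℂ := by rw [haw2]
        _ = (c * m * m) * ⟪vHH, vHH⟫_ℂ := inner_smul_right _ _ _
        _ = c * ((m : ℂ) * m) := by rw [hvHHvHH]; ring
    have hmm : (m : ℂ) * m ≠ 0 := mul_ne_zero hmC hmC
    apply mul_left_cancel₀ hmm
    rw [show ((m : ℂ) * m) * (a * ⟪vHH, vD⟫_ℂ) = a * (((m : ℂ) * m) * ⟪vHH, vD⟫_ℂ) by ring, h1]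
    ring
  -- final algebra
  set s : ℂ := ⟪vHH, vD⟫_ℂ with hs
  have hconj : ⟪vD, vHH⟫_ℂ = (starRingEnd ℂ) s := by
    rw [hs, ← inner_conj_symm]
  rw [hconj] at heq1
  set t : ℂ := (starRingEnd ℂ) s with ht
  have h5 : (N : ℂ) * (c * t * n) = (N : ℂ) * a := by
    linear_combination (n : ℂ) * heq1 + htrTT
  have h6 : c * t * n = a := mul_left_cancel₀ hNC h5
  have h7 : c * (t * n * s) = c * 1 := by linear_combination s * h6 + heq2
  have h8 : t * (n : ℂ) * s = 1 := mul_left_cancel₀ hc0 h7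
  have h9 : (n : ℂ) * ((Complex.normSq s : ℝ) : ℂ) = 1 := by
    rw [← Complex.mul_conj]
    linear_combination h8
  have h10 : (n : ℝ) * Complex.normSq s = 1 := by exact_mod_cast h9
  have hnR : (n : ℝ) ≠ 0 := by exact_mod_cast hn0.ne'
  rw [Complex.sq_norm, eq_div_iff hnR]
  linarith [h10]
end

section
/- Let q be an odd prime power and let χ be a character of F_q^× with χ² ≠ 1. Fix α ∈ F_q^× such that the matrix [[1,α],[1,1]] has order q+1 in PGL₂(F_q). In the principal series representation π = Ps(χ, χ⁻¹) of PGL₂(F_q), with the explicit unit invariant vectors v_H and v_K for the split torus H and the nonsplit torus K generated by [[1,α],[1,1]], one has ⟨v_H, v_K⟩_π = (1/(|H||K|)) Σ_{λ∈F_q^×} χ(αλ⁻¹ − λ). -/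
open Matrix

noncomputable section

variable (F : Type) [Field F] [Fintype F] [DecidableEq F]

/-- The Bruhat basis vector `f` of the principal series `Ps(χ, χ⁻¹)` of `PGL₂(F_q)` in
the induced model (`f(bg) = χ(b₀₀/b₁₁) f(g)` for upper triangular `b`), supported on the
Borel subgroup and normalized by `f(1) = 1`. -/
def brF (χ : MulChar F ℂ) (g : GL (Fin 2) F) : ℂ :=
  if (g : Matrix (Fin 2) (Fin 2) F) 1 0 = 0 then
    χ ((g : Matrix (Fin 2) (Fin 2) F) 0 0 / (g : Matrix (Fin 2) (Fin 2) F) 1 1)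
  else 0

/-- The Bruhat basis vector `f_λ` of the principal series `Ps(χ, χ⁻¹)` of `PGL₂(F_q)`,
supported on the Borel coset of `w·[[1,λ],[0,1]]` (where `w = [[0,1],[1,0]]`) and
normalized by `f_λ(w·[[1,λ],[0,1]]) = 1`. -/
def brFl (χ : MulChar F ℂ) (l : F) (g : GL (Fin 2) F) : ℂ :=
  if (g : Matrix (Fin 2) (Fin 2) F) 1 0 ≠ 0 ∧
      (g : Matrix (Fin 2) (Fin 2) F) 1 1 / (g : Matrix (Fin 2) (Fin 2) F) 1 0 = l then
    χ (-(g : Matrix (Fin 2) (Fin 2) F).det / ((g : Matrix (Fin 2) (Fin 2) F) 1 0) ^ 2)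
  else 0

/-- The standard `G`-invariant inner product on the induced model of the principal
series, normalized so that the Bruhat basis `{f, f_λ}` is orthonormal (each basis vector
is supported on a single Borel coset, of cardinality `q(q-1)²`, with values of modulus
one). -/
def psInner (φ ψ' : GL (Fin 2) F → ℂ) : ℂ :=
  ((Fintype.card F * (Fintype.card F - 1) ^ 2 : ℕ) : ℂ)⁻¹ *
    ∑ g : GL (Fin 2) F, φ g * (starRingEnd ℂ) (ψ' g)

/-- The `H`-invariant unit vector `v_H = (1/|H|) ∑_{λ≠0} χ⁻¹(λ) f_λ` for the split torus
`H`. -/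
def psVH (χ : MulChar F ℂ) : GL (Fin 2) F → ℂ := fun g =>
  ((Fintype.card F - 1 : ℕ) : ℂ)⁻¹ * ∑ l : Fˣ, χ⁻¹ (l : F) * brFl F χ (l : F) g

/-- The `K`-invariant unit vector `v_K = (1/|K|)(f + ∑_λ χ(1/(α-λ²)) f_λ)` for the
non-split torus `K = ⟨[[1,α],[1,1]]⟩`. -/
def psVK (χ : MulChar F ℂ) (α : F) : GL (Fin 2) F → ℂ := fun g =>
  ((Fintype.card F + 1 : ℕ) : ℂ)⁻¹ *
    (brF F χ g + ∑ l : F, χ ((α - l ^ 2)⁻¹) * brFl F χ l g)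

set_option linter.unusedSectionVars false


lemma conj_chi (χ : MulChar F ℂ) (v : F) : (starRingEnd ℂ) (χ v) = χ v⁻¹ := by
  rw [← MulChar.inv_apply']
  exact MulChar.star_apply' χ v

lemma chi_mul_conj (χ : MulChar F ℂ) {v : F} (hv : v ≠ 0) :
    χ v * (starRingEnd ℂ) (χ v) = 1 := by
  rw [conj_chi, ← _root_.map_mul, mul_inv_cancel₀ hv, χ.map_one]

lemma coe_mkOfDetNeZero {n : Type*} [DecidableEq n] [Fintype n] (A : Matrix n n F)
    (h : A.det ≠ 0) :
    ((Matrix.GeneralLinearGroup.mkOfDetNeZero A h : GL n F) : Matrix n n F) = A := rfl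

def cosetEquiv (l : F) :
    {g : GL (Fin 2) F // (g : Matrix (Fin 2) (Fin 2) F) 1 0 ≠ 0 ∧
      (g : Matrix (Fin 2) (Fin 2) F) 1 1 / (g : Matrix (Fin 2) (Fin 2) F) 1 0 = l}
      ≃ F × Fˣ × Fˣ where
  toFun g := (g.1.val 0 0,
    Units.mk0 (g.1.val 0 0 * l - g.1.val 0 1) (by
      have h10 := g.2.1
      have h11 : g.1.val 1 1 = l * g.1.val 1 0 := by
        have h := g.2.2
        rw [div_eq_iff h10] at h
        exact h
      have hdet : (g.1.val).det ≠ 0 := by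
        intro h
        have : IsUnit (g.1.val).det := by
          rw [← Matrix.isUnit_iff_isUnit_det]
          exact ⟨g.1, rfl⟩
        exact this.ne_zero h
      rw [Matrix.det_fin_two, h11] at hdet
      intro h
      apply hdet
      have : g.1.val 0 1 = g.1.val 0 0 * l := by linear_combination -h
      rw [this]; ring),
    Units.mk0 (g.1.val 1 0) g.2.1)
  invFun x := ⟨Matrix.GeneralLinearGroup.mkOfDetNeZero
      !![x.1, x.1 * l - x.2.1; (x.2.2 : F), l * x.2.2]
      (by
        rw [Matrix.det_fin_two_of]
        have hb : (x.2.1 : F) ≠ 0 := x.2.1.ne_zero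
        have hc : (x.2.2 : F) ≠ 0 := x.2.2.ne_zero
        intro h
        apply hb
        have : (x.2.1 : F) * x.2.2 = 0 := by linear_combination h
        rcases mul_eq_zero.1 this with h' | h'
        · exact h'
        · exact absurd h' hc), by
      constructor
      · show !![x.1, x.1 * l - x.2.1; (x.2.2 : F), l * x.2.2] 1 0 ≠ 0
        simpa using x.2.2.ne_zero
      · show !![x.1, x.1 * l - x.2.1; (x.2.2 : F), l * x.2.2] 1 1 /
            !![x.1, x.1 * l - x.2.1; (x.2.2 : F), l * x.2.2] 1 0 = l
        simp [mul_div_assoc, div_self x.2.2.ne_zero]⟩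
  left_inv g := by
    apply Subtype.ext
    apply Matrix.GeneralLinearGroup.ext
    intro i j
    have h10 := g.2.1
    have h11 : g.1.val 1 1 = l * g.1.val 1 0 := by
      have h := g.2.2
      rw [div_eq_iff h10] at h
      exact h
    show !![g.1.val 0 0, g.1.val 0 0 * l - (g.1.val 0 0 * l - g.1.val 0 1);
        (g.1.val 1 0 : F), l * g.1.val 1 0] i j = g.1.val i j
    fin_cases i <;> fin_cases j <;> simp [h11.symm]
  right_inv x := by
    refine Prod.ext rfl (Prod.ext (Units.ext ?_) (Units.ext ?_)) <;> simp [coe_mkOfDetNeZero]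

lemma card_coset (l : F) :
    (Finset.univ.filter (fun g : GL (Fin 2) F =>
      (g : Matrix (Fin 2) (Fin 2) F) 1 0 ≠ 0 ∧
      (g : Matrix (Fin 2) (Fin 2) F) 1 1 / (g : Matrix (Fin 2) (Fin 2) F) 1 0 = l)).card
    = Fintype.card F * (Fintype.card F - 1) ^ 2 := by
  rw [← Fintype.card_subtype, Fintype.card_congr (cosetEquiv F l), Fintype.card_prod,
    Fintype.card_prod, Fintype.card_units, sq]

lemma det_ne_zero' (g : GL (Fin 2) F) : (g : Matrix (Fin 2) (Fin 2) F).det ≠ 0 := by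
  have : IsUnit (g : Matrix (Fin 2) (Fin 2) F).det := by
    rw [← Matrix.isUnit_iff_isUnit_det]
    exact ⟨g, rfl⟩
  exact this.ne_zero

lemma sum_brFl_brF (χ : MulChar F ℂ) (l : F) :
    ∑ g : GL (Fin 2) F, brFl F χ l g * (starRingEnd ℂ) (brF F χ g) = 0 := by
  apply Finset.sum_eq_zero; intro g _
  unfold brFl brF
  by_cases h : (g : Matrix (Fin 2) (Fin 2) F) 1 0 = 0 <;> simp [h]

lemma sum_brFl_brFl (χ : MulChar F ℂ) (l m : F) :
    ∑ g : GL (Fin 2) F, brFl F χ l g * (starRingEnd ℂ) (brFl F χ m g) =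
      if m = l then ((Fintype.card F * (Fintype.card F - 1) ^ 2 : ℕ) : ℂ) else 0 := by
  rcases eq_or_ne m l with rfl | hml
  · rw [if_pos rfl, ← card_coset F m]
    rw [← Finset.sum_boole]
    apply Finset.sum_congr rfl
    intro g _
    unfold brFl
    by_cases h : (g : Matrix (Fin 2) (Fin 2) F) 1 0 ≠ 0 ∧
        (g : Matrix (Fin 2) (Fin 2) F) 1 1 / (g : Matrix (Fin 2) (Fin 2) F) 1 0 = m
    · rw [if_pos h, if_pos h, chi_mul_conj]
      exact div_ne_zero (neg_ne_zero.2 (det_ne_zero' F g)) (pow_ne_zero 2 h.1)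
    · rw [if_neg h, if_neg h, zero_mul]
  · rw [if_neg hml]
    apply Finset.sum_eq_zero; intro g _
    unfold brFl
    by_cases h : (g : Matrix (Fin 2) (Fin 2) F) 1 0 ≠ 0 ∧
        (g : Matrix (Fin 2) (Fin 2) F) 1 1 / (g : Matrix (Fin 2) (Fin 2) F) 1 0 = l
    · have : ¬((g : Matrix (Fin 2) (Fin 2) F) 1 0 ≠ 0 ∧
          (g : Matrix (Fin 2) (Fin 2) F) 1 1 / (g : Matrix (Fin 2) (Fin 2) F) 1 0 = m) := by
        rintro ⟨-, h2⟩
        exact hml (h2 ▸ h.2.symm ▸ rfl)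
      rw [if_neg this, map_zero, mul_zero]
    · rw [if_neg h, zero_mul]

/-- Let `q` be an odd prime power, `χ` a character of `F_q^×` with `χ² ≠ 1`, and
`α ∈ F_q^×` such that `k_α = [[1,α],[1,1]]` has order `q+1` in `PGL₂(F_q)`. In the
principal series `π = Ps(χ, χ⁻¹)` of `PGL₂(F_q)` with explicit unit invariant vectors
`v_H` (split torus) and `v_K` (non-split torus `⟨k_α⟩`), one has
`⟨v_H, v_K⟩_π = (1/(|H||K|)) ∑_{λ ∈ F_q^×} χ(αλ⁻¹ - λ)`. -/
theorem stmt_6 (hodd : Odd (Fintype.card F)) (χ : MulChar F ℂ) (hχ : χ ^ 2 ≠ 1)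
    (α : F) (hα : α ≠ 0) (k : GL (Fin 2) F)
    (hk : (k : Matrix (Fin 2) (Fin 2) F) = !![1, α; 1, 1])
    (hord : orderOf
        (QuotientGroup.mk k : GL (Fin 2) F ⧸ Subgroup.center (GL (Fin 2) F)) =
      Fintype.card F + 1) :
    psInner F (psVH F χ) (psVK F χ α) =
      (((Fintype.card F - 1) * (Fintype.card F + 1) : ℕ) : ℂ)⁻¹ *
        ∑ l : Fˣ, χ (α * (l : F)⁻¹ - (l : F)) := by
  classical
  have hq2 : 1 < Fintype.card F := Fintype.one_lt_card
  have hN : ((Fintype.card F * (Fintype.card F - 1) ^ 2 : ℕ) : ℂ) ≠ 0 := by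
    rw [Nat.cast_ne_zero]
    exact Nat.mul_ne_zero (by omega) (pow_ne_zero 2 (by omega))
  have key : ∀ l : Fˣ, χ⁻¹ (l : F) * (starRingEnd ℂ) (χ ((α - (l : F) ^ 2)⁻¹))
      = χ (α * (l : F)⁻¹ - (l : F)) := by
    intro l
    rw [conj_chi F, inv_inv, MulChar.inv_apply']
    rcases eq_or_ne (α - (l : F) ^ 2) 0 with h | h
    · have h1 : α * (l : F)⁻¹ - (l : F) = (α - (l : F) ^ 2) * (l : F)⁻¹ := by
        field_simp
      rw [h1, h, zero_mul, MulChar.map_zero, mul_zero]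
    · rw [← _root_.map_mul]
      congr 1
      field_simp
  have step1 : ∀ g : GL (Fin 2) F, psVH F χ g * (starRingEnd ℂ) (psVK F χ α g)
      = (((Fintype.card F - 1 : ℕ) : ℂ)⁻¹ * ((Fintype.card F + 1 : ℕ) : ℂ)⁻¹) *
        ((∑ l : Fˣ, χ⁻¹ (l : F) * brFl F χ (l : F) g) * (starRingEnd ℂ) (brF F χ g)
         + ∑ l : Fˣ, ∑ m : F,
            (χ⁻¹ (l : F) * (starRingEnd ℂ) (χ ((α - m ^ 2)⁻¹))) *
              (brFl F χ (l : F) g * (starRingEnd ℂ) (brFl F χ m g))) := by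
    intro g
    unfold psVH psVK
    rw [_root_.map_mul, map_add, map_sum]
    rw [show (starRingEnd ℂ) (((Fintype.card F + 1 : ℕ) : ℂ)⁻¹)
        = ((Fintype.card F + 1 : ℕ) : ℂ)⁻¹ by simp]
    simp only [_root_.map_mul]
    rw [mul_mul_mul_comm]
    congr 1
    rw [mul_add]
    congr 1
    rw [Finset.sum_mul_sum]
    exact Finset.sum_congr rfl fun l _ => Finset.sum_congr rfl fun m _ => by ring
  have T1 : ∑ g : GL (Fin 2) F,
      (∑ l : Fˣ, χ⁻¹ (l : F) * brFl F χ (l : F) g) * (starRingEnd ℂ) (brF F χ g) = 0 := by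
    have e : ∀ g : GL (Fin 2) F,
        (∑ l : Fˣ, χ⁻¹ (l : F) * brFl F χ (l : F) g) * (starRingEnd ℂ) (brF F χ g)
        = ∑ l : Fˣ, χ⁻¹ (l : F) * (brFl F χ (l : F) g * (starRingEnd ℂ) (brF F χ g)) := by
      intro g
      rw [Finset.sum_mul]
      exact Finset.sum_congr rfl fun l _ => by ring
    simp only [e]
    rw [Finset.sum_comm]
    apply Finset.sum_eq_zero
    intro l _
    rw [← Finset.mul_sum, sum_brFl_brF, mul_zero]
  have T2 : ∑ g : GL (Fin 2) F, ∑ l : Fˣ, ∑ m : F,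
      (χ⁻¹ (l : F) * (starRingEnd ℂ) (χ ((α - m ^ 2)⁻¹))) *
        (brFl F χ (l : F) g * (starRingEnd ℂ) (brFl F χ m g))
      = ((Fintype.card F * (Fintype.card F - 1) ^ 2 : ℕ) : ℂ) *
        ∑ l : Fˣ, χ (α * (l : F)⁻¹ - (l : F)) := by
    rw [Finset.sum_comm]
    have e : ∀ l : Fˣ, ∑ g : GL (Fin 2) F, ∑ m : F,
        (χ⁻¹ (l : F) * (starRingEnd ℂ) (χ ((α - m ^ 2)⁻¹))) *
          (brFl F χ (l : F) g * (starRingEnd ℂ) (brFl F χ m g))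
        = ∑ m : F, (χ⁻¹ (l : F) * (starRingEnd ℂ) (χ ((α - m ^ 2)⁻¹))) *
            ∑ g : GL (Fin 2) F, brFl F χ (l : F) g * (starRingEnd ℂ) (brFl F χ m g) := by
      intro l
      rw [Finset.sum_comm]
      exact Finset.sum_congr rfl fun m _ => (Finset.mul_sum _ _ _).symm
    simp only [e, sum_brFl_brFl, mul_ite, mul_zero]
    rw [Finset.mul_sum]
    refine Finset.sum_congr rfl fun l _ => ?_
    rw [Finset.sum_ite_eq' Finset.univ ((l : F))
      (fun m => χ⁻¹ (l : F) * (starRingEnd ℂ) (χ ((α - m ^ 2)⁻¹)) *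
        ((Fintype.card F * (Fintype.card F - 1) ^ 2 : ℕ) : ℂ))]
    rw [if_pos (Finset.mem_univ _), key l]
    ring
  rw [psInner]
  simp only [step1]
  rw [← Finset.mul_sum, Finset.sum_add_distrib, T1, T2, zero_add,
    Nat.cast_mul (Fintype.card F - 1) (Fintype.card F + 1), mul_inv]
  linear_combination (((Fintype.card F - 1 : ℕ) : ℂ)⁻¹ * ((Fintype.card F + 1 : ℕ) : ℂ)⁻¹ *
    ∑ l : Fˣ, χ (α * (l : F)⁻¹ - (l : F))) * inv_mul_cancel₀ hN

end
end

section
/- Let q be an odd prime power, π = Ps(χ,χ⁻¹) an irreducible principal series representation of PGL₂(F_q) with unit invariant vectors v_H for the split torus H and v_{K_a} for the nonsplit torus K_a = ⟨[[1,αa²],[1,1]]⟩ (for a ∈ F_q^× such that this element has order q+1). Then ⟨v_H, v_{K_a}⟩ = χ(a)·⟨v_H, v_{K_1}⟩, where K_1 = ⟨[[1,α],[1,1]]⟩. -/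
open Matrix

noncomputable section

variable (F : Type) [Field F] [Fintype F] [DecidableEq F]

set_option linter.unusedSectionVars false

/-- The diagonal element `diag(a⁻¹, 1)` of `GL₂`. -/
def dElt {a : F} (ha : a ≠ 0) : GL (Fin 2) F :=
  ⟨!![a⁻¹, 0; 0, 1], !![a, 0; 0, 1],
    by ext i j; fin_cases i <;> fin_cases j <;>
      simp [Matrix.mul_apply, Fin.sum_univ_two, inv_mul_cancel₀ ha, Matrix.one_apply],
    by ext i j; fin_cases i <;> fin_cases j <;>
      simp [Matrix.mul_apply, Fin.sum_univ_two, mul_inv_cancel₀ ha, Matrix.one_apply]⟩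

lemma dmul_val {a : F} (ha : a ≠ 0) (g : GL (Fin 2) F) :
    ((g * dElt F ha : GL (Fin 2) F) : Matrix (Fin 2) (Fin 2) F) =
      !![(g : Matrix (Fin 2) (Fin 2) F) 0 0 * a⁻¹, (g : Matrix (Fin 2) (Fin 2) F) 0 1;
         (g : Matrix (Fin 2) (Fin 2) F) 1 0 * a⁻¹, (g : Matrix (Fin 2) (Fin 2) F) 1 1] := by
  show (g : Matrix (Fin 2) (Fin 2) F) * !![a⁻¹, 0; 0, 1] = _
  ext i j
  fin_cases i <;> fin_cases j <;> simp [Matrix.mul_apply, Fin.sum_univ_two]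

lemma brFl_d (χ : MulChar F ℂ) {a : F} (ha : a ≠ 0) (l : F) (g : GL (Fin 2) F) :
    brFl F χ l (g * dElt F ha) = χ a * brFl F χ (l * a⁻¹) g := by
  unfold brFl
  rw [dmul_val F ha g]
  set M := (g : Matrix (Fin 2) (Fin 2) F) with hM
  simp only [Matrix.det_fin_two_of, Matrix.det_fin_two, Matrix.of_apply, Matrix.cons_val',
    Matrix.cons_val_zero, Matrix.cons_val_one, Matrix.head_cons, Matrix.head_fin_const,
    Matrix.empty_val', Matrix.cons_val_fin_one]
  by_cases h0 : M 1 0 = 0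
  · simp [h0]
  · have h0' : M 1 0 * a⁻¹ ≠ 0 := mul_ne_zero h0 (inv_ne_zero ha)
    have hdiv : M 1 1 / (M 1 0 * a⁻¹) = M 1 1 / M 1 0 * a := by field_simp
    have hcond : (M 1 0 * a⁻¹ ≠ 0 ∧ M 1 1 / (M 1 0 * a⁻¹) = l) ↔
        (M 1 0 ≠ 0 ∧ M 1 1 / M 1 0 = l * a⁻¹) := by
      rw [hdiv]
      constructor
      · rintro ⟨-, h2⟩; exact ⟨h0, by rw [← h2, mul_inv_cancel_right₀ ha]⟩
      · rintro ⟨-, h2⟩; exact ⟨h0', by rw [h2, inv_mul_cancel_right₀ ha]⟩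
    rw [if_congr hcond rfl rfl]
    by_cases hl : M 1 0 ≠ 0 ∧ M 1 1 / M 1 0 = l * a⁻¹
    · rw [if_pos hl, if_pos hl, ← _root_.map_mul χ]
      congr 1
      field_simp
    · rw [if_neg hl, if_neg hl, mul_zero]

lemma brF_d (χ : MulChar F ℂ) {a : F} (ha : a ≠ 0) (g : GL (Fin 2) F) :
    brF F χ (g * dElt F ha) = χ a⁻¹ * brF F χ g := by
  unfold brF
  rw [dmul_val F ha g]
  set M := (g : Matrix (Fin 2) (Fin 2) F) with hM
  simp only [Matrix.of_apply, Matrix.cons_val', Matrix.cons_val_zero, Matrix.cons_val_one,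
    Matrix.head_cons, Matrix.head_fin_const, Matrix.empty_val', Matrix.cons_val_fin_one]
  by_cases h0 : M 1 0 = 0
  · rw [if_pos (by rw [h0, zero_mul]), if_pos h0, ← _root_.map_mul χ]
    congr 1
    ring
  · rw [if_neg (mul_ne_zero h0 (inv_ne_zero ha)), if_neg h0, mul_zero]

lemma chi_inv_mul (χ : MulChar F ℂ) {a : F} (ha : a ≠ 0) : χ a⁻¹ * χ a = 1 := by
  rw [← _root_.map_mul χ, inv_mul_cancel₀ ha, χ.map_one]

lemma psVH_d (χ : MulChar F ℂ) {a : F} (ha : a ≠ 0) (g : GL (Fin 2) F) :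
    psVH F χ (g * dElt F ha) = psVH F χ g := by
  unfold psVH
  congr 1
  rw [← Equiv.sum_comp (Equiv.mulRight (Units.mk0 a ha))
    (fun l : Fˣ => χ⁻¹ (l : F) * brFl F χ (l : F) (g * dElt F ha))]
  refine Finset.sum_congr rfl fun m _ => ?_
  simp only [Equiv.coe_mulRight, Units.val_mul, Units.val_mk0]
  rw [brFl_d F χ ha, mul_inv_cancel_right₀ ha, _root_.map_mul χ⁻¹,
    MulChar.inv_apply' χ a]
  have h1 := chi_inv_mul F χ ha
  linear_combination (χ⁻¹ (m : F) * brFl F χ (m : F) g) * h1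

lemma psVK_d (χ : MulChar F ℂ) (α : F) {a : F} (ha : a ≠ 0) (g : GL (Fin 2) F) :
    psVK F χ (α * a ^ 2) (g * dElt F ha) = χ a⁻¹ * psVK F χ α g := by
  unfold psVK
  rw [brF_d F χ ha g]
  rw [← Equiv.sum_comp (Equiv.mulRight₀ a ha)
    (fun l : F => χ ((α * a ^ 2 - l ^ 2)⁻¹) * brFl F χ l (g * dElt F ha))]
  have hsum : ∀ m : F, χ ((α * a ^ 2 - (Equiv.mulRight₀ a ha m) ^ 2)⁻¹) *
      brFl F χ (Equiv.mulRight₀ a ha m) (g * dElt F ha) =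
      χ a⁻¹ * (χ ((α - m ^ 2)⁻¹) * brFl F χ m g) := by
    intro m
    simp only [Equiv.mulRight₀_apply]
    rw [brFl_d F χ ha, mul_inv_cancel_right₀ ha]
    have h2 : (α * a ^ 2 - (m * a) ^ 2)⁻¹ = (a ^ 2)⁻¹ * (α - m ^ 2)⁻¹ := by
      rw [← mul_inv, show α * a ^ 2 - (m * a) ^ 2 = a ^ 2 * (α - m ^ 2) by ring]
    rw [h2, _root_.map_mul χ, show (a ^ 2 : F)⁻¹ = a⁻¹ * a⁻¹ by
      rw [sq, mul_inv], _root_.map_mul χ]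
    have h1 := chi_inv_mul F χ ha
    linear_combination χ a⁻¹ * χ ((α - m ^ 2)⁻¹) * brFl F χ m g * h1
  rw [Finset.sum_congr rfl fun m _ => hsum m, ← Finset.mul_sum]
  ring

lemma conj_chi_inv (χ : MulChar F ℂ) {a : F} (ha : a ≠ 0) :
    (starRingEnd ℂ) ((χ a)⁻¹) = χ a := by
  rw [map_inv₀]
  have hs : (starRingEnd ℂ) (χ a) = χ⁻¹ a := MulChar.star_apply' χ a
  rw [hs, MulChar.inv_apply' χ a]
  exact inv_eq_of_mul_eq_one_right (chi_inv_mul F χ ha)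

/-- Let `q` be an odd prime power, `π = Ps(χ, χ⁻¹)` an irreducible principal series of
`PGL₂(F_q)` with unit invariant vectors `v_H` for the split torus and `v_{K_a}` for the
non-split torus `K_a = ⟨[[1,αa²],[1,1]]⟩` (where both `[[1,α],[1,1]]` and
`[[1,αa²],[1,1]]` have order `q+1` in `PGL₂(F_q)`). Then
`⟨v_H, v_{K_a}⟩ = χ(a) ⟨v_H, v_{K_1}⟩`. -/
theorem stmt_18 (hodd : Odd (Fintype.card F)) (χ : MulChar F ℂ) (hχ : χ ^ 2 ≠ 1)
    (α : F) (hα : α ≠ 0) (a : F) (ha : a ≠ 0)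
    (k : GL (Fin 2) F) (hk : (k : Matrix (Fin 2) (Fin 2) F) = !![1, α; 1, 1])
    (hord : orderOf
        (QuotientGroup.mk k : GL (Fin 2) F ⧸ Subgroup.center (GL (Fin 2) F)) =
      Fintype.card F + 1)
    (k' : GL (Fin 2) F)
    (hk' : (k' : Matrix (Fin 2) (Fin 2) F) = !![1, α * a ^ 2; 1, 1])
    (hord' : orderOf
        (QuotientGroup.mk k' : GL (Fin 2) F ⧸ Subgroup.center (GL (Fin 2) F)) =
      Fintype.card F + 1) :
    psInner F (psVH F χ) (psVK F χ (α * a ^ 2)) =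
      χ a * psInner F (psVH F χ) (psVK F χ α) := by
  have key : ∀ g : GL (Fin 2) F,
      psVH F χ (g * dElt F ha) *
        (starRingEnd ℂ) (psVK F χ (α * a ^ 2) (g * dElt F ha)) =
      χ a * (psVH F χ g * (starRingEnd ℂ) (psVK F χ α g)) := by
    intro g
    rw [psVH_d F χ ha g, psVK_d F χ α ha g, _root_.map_mul (starRingEnd ℂ)]
    rw [show (starRingEnd ℂ) (χ a⁻¹) = χ a from by
      rw [← MulChar.inv_apply' χ a, starRingEnd_apply, MulChar.star_apply' χ⁻¹ a, inv_inv]]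
    ring
  unfold psInner
  rw [← Equiv.sum_comp (Equiv.mulRight (dElt F ha))
    (fun g => psVH F χ g * (starRingEnd ℂ) (psVK F χ (α * a ^ 2) g))]
  simp only [Equiv.coe_mulRight]
  rw [Finset.sum_congr rfl fun g _ => key g, ← Finset.mul_sum]
  ring

end
end
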